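/- arXiv:1509.01194 — 7 statements merged into one kernel-verified Lean document; each statement's English description precedes it below -/
import Mathlib

section
/- Let X₁,...,X_ℓ be mutually independent integer-valued random variables with finite third moments, Vᵢ = Var(Xᵢ), and M = E[ΣᵢXᵢ] > 0. Let φ* be the distribution obtained by fitness-proportional selection: φ*(x) ∝ F(x)·φ(x) with F(x) = Σᵢxᵢ. Then the variance of the fitness under the product of the marginals of φ* exceeds the fitness variance of φ* by exactly (Σ_{i≠j} VᵢVⱼ)/M²; in particular this quantity is non-negative, i.e., LD₂(φ*) = −(Σ_{i≠j} VᵢVⱼ)/M² ≤ 0. -/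
open scoped BigOperators

/-- Mean of a distribution on `ℤ`. -/
noncomputable def fmean (φ : ℤ → ℝ) : ℝ := ∑ᶠ x : ℤ, (x : ℝ) * φ x

/-- Variance of a distribution on `ℤ`. -/
noncomputable def fvar (φ : ℤ → ℝ) : ℝ := ∑ᶠ x : ℤ, ((x : ℝ) - fmean φ) ^ 2 * φ x

/-- Additive fitness. -/
def fitness {ℓ : ℕ} (x : Fin ℓ → ℤ) : ℝ := ((∑ i, x i : ℤ) : ℝ)

/-- Mean fitness of a joint distribution. -/
noncomputable def fitMean {ℓ : ℕ} (ψ : (Fin ℓ → ℤ) → ℝ) : ℝ :=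
  ∑ᶠ x : Fin ℓ → ℤ, fitness x * ψ x

/-- Fitness variance of a joint distribution. -/
noncomputable def fitVar {ℓ : ℕ} (ψ : (Fin ℓ → ℤ) → ℝ) : ℝ :=
  ∑ᶠ x : Fin ℓ → ℤ, (fitness x - fitMean ψ) ^ 2 * ψ x

/-- Marginal distribution at locus `i`. -/
noncomputable def marginal {ℓ : ℕ} (ψ : (Fin ℓ → ℤ) → ℝ) (i : Fin ℓ) (y : ℤ) : ℝ :=
  ∑ᶠ x : Fin ℓ → ℤ, if x i = y then ψ x else 0

/-- Recombination: replace a joint distribution by the product of its marginals. -/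
noncomputable def recomb {ℓ : ℕ} (ψ : (Fin ℓ → ℤ) → ℝ) : (Fin ℓ → ℤ) → ℝ :=
  fun x => ∏ i, marginal ψ i (x i)

section RVGAux

open Finset

/-- Scalar mean over a finset. -/
noncomputable def RVGm (s : Finset ℤ) (ρ : ℤ → ℝ) : ℝ := ∑ y ∈ s, (y : ℝ) * ρ y

/-- Scalar central moment over a finset. -/
noncomputable def RVGc (s : Finset ℤ) (ρ : ℤ → ℝ) (k : ℕ) : ℝ :=
  ∑ y ∈ s, ((y : ℝ) - RVGm s ρ) ^ k * ρ y

lemma RVG_c1 (t : Finset ℤ) (r : ℤ → ℝ) (h : ∑ y ∈ t, r y = 1) :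
    ∑ y ∈ t, ((y : ℝ) - RVGm t r) * r y = 0 := by
  simp only [sub_mul, Finset.sum_sub_distrib, ← Finset.mul_sum, h, mul_one]
  simp [RVGm]

lemma RVG_combo {α : Type*} (t : Finset α) (ρ d : α → ℝ) (S0 S1 S2 S3 c3 c2 c1 c0 : ℝ)
    (h0 : ∑ a ∈ t, ρ a = S0) (h1 : ∑ a ∈ t, d a * ρ a = S1)
    (h2 : ∑ a ∈ t, d a ^ 2 * ρ a = S2) (h3 : ∑ a ∈ t, d a ^ 3 * ρ a = S3) :
    ∑ a ∈ t, (c3 * d a ^ 3 + c2 * d a ^ 2 + c1 * d a + c0) * ρ a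
      = c3 * S3 + c2 * S2 + c1 * S1 + c0 * S0 := by
  have : ∀ a, (c3 * d a ^ 3 + c2 * d a ^ 2 + c1 * d a + c0) * ρ a
      = c3 * (d a ^ 3 * ρ a) + c2 * (d a ^ 2 * ρ a) + c1 * (d a * ρ a) + c0 * ρ a := by
    intro a; ring
  rw [Finset.sum_congr rfl fun a _ => this a]
  simp only [Finset.sum_add_distrib, ← Finset.mul_sum, h0, h1, h2, h3]

variable {ℓ : ℕ}

lemma RVG_fitness (x : Fin ℓ → ℤ) : fitness x = ∑ i, ((x i : ℝ)) := by
  simp [fitness]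

lemma RVG_pi (s : Fin ℓ → Finset ℤ) (g : Fin ℓ → ℤ → ℝ) :
    ∑ x ∈ Fintype.piFinset s, ∏ i, g i (x i) = ∏ i, ∑ y ∈ s i, g i y :=
  (Finset.prod_univ_sum s g).symm

variable (s : Fin ℓ → Finset ℤ) (ρ : Fin ℓ → ℤ → ℝ)

lemma RVG_single (hp : ∀ i, ∑ y ∈ s i, ρ i y = 1) (i : Fin ℓ) (f : ℤ → ℝ) :
    ∑ x ∈ Fintype.piFinset s, f (x i) * ∏ l, ρ l (x l) = ∑ y ∈ s i, f y * ρ i y := by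
  have h1 : ∀ x : Fin ℓ → ℤ, f (x i) * ∏ l, ρ l (x l)
      = ∏ l, ((if l = i then f (x l) else 1) * ρ l (x l)) := by
    intro x
    rw [Finset.prod_mul_distrib, Finset.prod_ite_eq' Finset.univ i fun l => f (x l)]
    simp
  rw [Finset.sum_congr rfl fun x _ => h1 x,
    RVG_pi s fun l t => (if l = i then f t else 1) * ρ l t]
  have h2 : ∀ l, (∑ y ∈ s l, (if l = i then f y else 1) * ρ l y)
      = if l = i then ∑ y ∈ s i, f y * ρ i y else 1 := by
    intro l
    by_cases h : l = i
    · subst h; simp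
    · simp [h, hp l]
  rw [Finset.prod_congr rfl fun l _ => h2 l,
    Finset.prod_ite_eq' Finset.univ i fun _ => ∑ y ∈ s i, f y * ρ i y]
  simp

lemma RVG_double (hp : ∀ i, ∑ y ∈ s i, ρ i y = 1) {i j : Fin ℓ} (hij : i ≠ j)
    (f g : ℤ → ℝ) :
    ∑ x ∈ Fintype.piFinset s, f (x i) * g (x j) * ∏ l, ρ l (x l)
      = (∑ y ∈ s i, f y * ρ i y) * (∑ y ∈ s j, g y * ρ j y) := by
  have h1 : ∀ x : Fin ℓ → ℤ, f (x i) * g (x j) * ∏ l, ρ l (x l)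
      = ∏ l, ((if l = i then f (x l) else 1) * (if l = j then g (x l) else 1) * ρ l (x l)) := by
    intro x
    rw [Finset.prod_mul_distrib, Finset.prod_mul_distrib,
      Finset.prod_ite_eq' Finset.univ i fun l => f (x l),
      Finset.prod_ite_eq' Finset.univ j fun l => g (x l)]
    simp
  rw [Finset.sum_congr rfl fun x _ => h1 x,
    RVG_pi s fun l t => (if l = i then f t else 1) * (if l = j then g t else 1) * ρ l t]
  have h2 : ∀ l, (∑ y ∈ s l, (if l = i then f y else 1) * (if l = j then g y else 1) * ρ l y)
      = (if l = i then ∑ y ∈ s i, f y * ρ i y else 1)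
        * (if l = j then ∑ y ∈ s j, g y * ρ j y else 1) := by
    intro l
    by_cases h : l = i
    · subst h; simp [hij, hp]
    · by_cases h' : l = j
      · subst h'; simp [h, hp]
      · simp [h, h', hp l]
  rw [Finset.prod_congr rfl fun l _ => h2 l, Finset.prod_mul_distrib,
    Finset.prod_ite_eq' Finset.univ i fun _ => ∑ y ∈ s i, f y * ρ i y,
    Finset.prod_ite_eq' Finset.univ j fun _ => ∑ y ∈ s j, g y * ρ j y]
  simp

lemma RVG_triple (hp : ∀ i, ∑ y ∈ s i, ρ i y = 1) {i j k : Fin ℓ}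
    (hij : i ≠ j) (hjk : j ≠ k) (hik : i ≠ k) (f g h : ℤ → ℝ) :
    ∑ x ∈ Fintype.piFinset s, f (x i) * g (x j) * h (x k) * ∏ l, ρ l (x l)
      = (∑ y ∈ s i, f y * ρ i y) * (∑ y ∈ s j, g y * ρ j y) * (∑ y ∈ s k, h y * ρ k y) := by
  have h1 : ∀ x : Fin ℓ → ℤ, f (x i) * g (x j) * h (x k) * ∏ l, ρ l (x l)
      = ∏ l, ((if l = i then f (x l) else 1) * (if l = j then g (x l) else 1)
          * (if l = k then h (x l) else 1) * ρ l (x l)) := by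
    intro x
    rw [Finset.prod_mul_distrib, Finset.prod_mul_distrib, Finset.prod_mul_distrib,
      Finset.prod_ite_eq' Finset.univ i fun l => f (x l),
      Finset.prod_ite_eq' Finset.univ j fun l => g (x l),
      Finset.prod_ite_eq' Finset.univ k fun l => h (x l)]
    simp
  rw [Finset.sum_congr rfl fun x _ => h1 x,
    RVG_pi s fun l t => (if l = i then f t else 1) * (if l = j then g t else 1)
      * (if l = k then h t else 1) * ρ l t]
  have h2 : ∀ l, (∑ y ∈ s l, (if l = i then f y else 1) * (if l = j then g y else 1)
          * (if l = k then h y else 1) * ρ l y)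
      = (if l = i then ∑ y ∈ s i, f y * ρ i y else 1)
        * (if l = j then ∑ y ∈ s j, g y * ρ j y else 1)
        * (if l = k then ∑ y ∈ s k, h y * ρ k y else 1) := by
    intro l
    by_cases hi : l = i
    · subst hi; simp [hij, hik, hp]
    · by_cases hj : l = j
      · subst hj; simp [hi, hjk, hp]
      · by_cases hk : l = k
        · subst hk; simp [hi, hj, hp]
        · simp [hi, hj, hk, hp l]
  rw [Finset.prod_congr rfl fun l _ => h2 l, Finset.prod_mul_distrib, Finset.prod_mul_distrib,
    Finset.prod_ite_eq' Finset.univ i fun _ => ∑ y ∈ s i, f y * ρ i y,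
    Finset.prod_ite_eq' Finset.univ j fun _ => ∑ y ∈ s j, g y * ρ j y,
    Finset.prod_ite_eq' Finset.univ k fun _ => ∑ y ∈ s k, h y * ρ k y]
  simp


lemma RVG_norm (hp : ∀ i, ∑ y ∈ s i, ρ i y = 1) :
    ∑ x ∈ Fintype.piFinset s, ∏ l, ρ l (x l) = 1 := by
  rw [RVG_pi, Finset.prod_congr rfl fun l _ => hp l]
  simp

lemma RVG_mean (hp : ∀ i, ∑ y ∈ s i, ρ i y = 1) :
    ∑ x ∈ Fintype.piFinset s, (∑ i, ((x i : ℝ))) * ∏ l, ρ l (x l)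
      = ∑ i, RVGm (s i) (ρ i) := by
  simp only [Finset.sum_mul]
  rw [Finset.sum_comm]
  exact Finset.sum_congr rfl fun i _ => RVG_single s ρ hp i fun y => (y : ℝ)

lemma RVG_C2 (hp : ∀ i, ∑ y ∈ s i, ρ i y = 1) (i j : Fin ℓ) :
    ∑ x ∈ Fintype.piFinset s,
        ((x i : ℝ) - RVGm (s i) (ρ i)) * ((x j : ℝ) - RVGm (s j) (ρ j)) * ∏ l, ρ l (x l)
      = if i = j then RVGc (s i) (ρ i) 2 else 0 := by
  by_cases h : i = j
  · subst h
    rw [if_pos rfl]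
    have h1 : ∀ x : Fin ℓ → ℤ,
        ((x i : ℝ) - RVGm (s i) (ρ i)) * ((x i : ℝ) - RVGm (s i) (ρ i)) * ∏ l, ρ l (x l)
          = ((x i : ℝ) - RVGm (s i) (ρ i)) ^ 2 * ∏ l, ρ l (x l) := by
      intro x; ring
    exact (Finset.sum_congr rfl fun x _ => h1 x).trans
      (RVG_single s ρ hp i fun t => ((t : ℝ) - RVGm (s i) (ρ i)) ^ 2)
  · rw [if_neg h,
      RVG_double s ρ hp h (fun t => (t : ℝ) - RVGm (s i) (ρ i))
        (fun t => (t : ℝ) - RVGm (s j) (ρ j)),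
      RVG_c1 (s i) (ρ i) (hp i), zero_mul]

lemma RVG_M1 (hp : ∀ i, ∑ y ∈ s i, ρ i y = 1) :
    ∑ x ∈ Fintype.piFinset s, (∑ i, ((x i : ℝ) - RVGm (s i) (ρ i))) * ∏ l, ρ l (x l)
      = 0 := by
  simp only [Finset.sum_mul]
  rw [Finset.sum_comm]
  rw [Finset.sum_congr rfl fun i _ =>
    RVG_single s ρ hp i fun t => (t : ℝ) - RVGm (s i) (ρ i)]
  rw [Finset.sum_congr rfl fun i _ => RVG_c1 (s i) (ρ i) (hp i)]
  simp

lemma RVG_M2 (hp : ∀ i, ∑ y ∈ s i, ρ i y = 1) :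
    ∑ x ∈ Fintype.piFinset s, (∑ i, ((x i : ℝ) - RVGm (s i) (ρ i))) ^ 2 * ∏ l, ρ l (x l)
      = ∑ i, RVGc (s i) (ρ i) 2 := by
  have e : ∀ x : Fin ℓ → ℤ, (∑ i, ((x i : ℝ) - RVGm (s i) (ρ i))) ^ 2
      = ∑ i, ∑ j, ((x i : ℝ) - RVGm (s i) (ρ i)) * ((x j : ℝ) - RVGm (s j) (ρ j)) := by
    intro x; rw [sq, Finset.sum_mul_sum]
  rw [Finset.sum_congr rfl fun x _ => by rw [e x]]
  simp only [Finset.sum_mul]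
  rw [Finset.sum_comm]
  trans (∑ i, ∑ j, if i = j then RVGc (s i) (ρ i) 2 else 0)
  · refine Finset.sum_congr rfl fun i _ => ?_
    rw [Finset.sum_comm]
    exact Finset.sum_congr rfl fun j _ => RVG_C2 s ρ hp i j
  · simp

lemma RVG_C3 (hp : ∀ i, ∑ y ∈ s i, ρ i y = 1) (i j k : Fin ℓ) :
    ∑ x ∈ Fintype.piFinset s,
        ((x i : ℝ) - RVGm (s i) (ρ i)) * ((x j : ℝ) - RVGm (s j) (ρ j))
          * ((x k : ℝ) - RVGm (s k) (ρ k)) * ∏ l, ρ l (x l)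
      = if i = j ∧ j = k then RVGc (s i) (ρ i) 3 else 0 := by
  by_cases hij : i = j
  · subst hij
    by_cases hik : i = k
    · subst hik
      rw [if_pos ⟨rfl, rfl⟩]
      have h1 : ∀ x : Fin ℓ → ℤ,
          ((x i : ℝ) - RVGm (s i) (ρ i)) * ((x i : ℝ) - RVGm (s i) (ρ i))
            * ((x i : ℝ) - RVGm (s i) (ρ i)) * ∏ l, ρ l (x l)
          = ((x i : ℝ) - RVGm (s i) (ρ i)) ^ 3 * ∏ l, ρ l (x l) := by
        intro x; ring
      exact (Finset.sum_congr rfl fun x _ => h1 x).trans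
        (RVG_single s ρ hp i fun t => ((t : ℝ) - RVGm (s i) (ρ i)) ^ 3)
    · rw [if_neg (by tauto)]
      have h1 : ∀ x : Fin ℓ → ℤ,
          ((x i : ℝ) - RVGm (s i) (ρ i)) * ((x i : ℝ) - RVGm (s i) (ρ i))
            * ((x k : ℝ) - RVGm (s k) (ρ k)) * ∏ l, ρ l (x l)
          = ((x i : ℝ) - RVGm (s i) (ρ i)) ^ 2
              * ((x k : ℝ) - RVGm (s k) (ρ k)) * ∏ l, ρ l (x l) := by
        intro x; ring
      rw [Finset.sum_congr rfl fun x _ => h1 x,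
        RVG_double s ρ hp hik (fun t => ((t : ℝ) - RVGm (s i) (ρ i)) ^ 2)
          (fun t => (t : ℝ) - RVGm (s k) (ρ k)),
        RVG_c1 (s k) (ρ k) (hp k), mul_zero]
  · rw [if_neg (by tauto)]
    by_cases hjk : j = k
    · subst hjk
      have h1 : ∀ x : Fin ℓ → ℤ,
          ((x i : ℝ) - RVGm (s i) (ρ i)) * ((x j : ℝ) - RVGm (s j) (ρ j))
            * ((x j : ℝ) - RVGm (s j) (ρ j)) * ∏ l, ρ l (x l)
          = ((x i : ℝ) - RVGm (s i) (ρ i))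
              * ((x j : ℝ) - RVGm (s j) (ρ j)) ^ 2 * ∏ l, ρ l (x l) := by
        intro x; ring
      rw [Finset.sum_congr rfl fun x _ => h1 x,
        RVG_double s ρ hp hij (fun t => (t : ℝ) - RVGm (s i) (ρ i))
          (fun t => ((t : ℝ) - RVGm (s j) (ρ j)) ^ 2),
        RVG_c1 (s i) (ρ i) (hp i), zero_mul]
    · by_cases hik : i = k
      · subst hik
        have h1 : ∀ x : Fin ℓ → ℤ,
            ((x i : ℝ) - RVGm (s i) (ρ i)) * ((x j : ℝ) - RVGm (s j) (ρ j))
              * ((x i : ℝ) - RVGm (s i) (ρ i)) * ∏ l, ρ l (x l)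
            = ((x i : ℝ) - RVGm (s i) (ρ i)) ^ 2
                * ((x j : ℝ) - RVGm (s j) (ρ j)) * ∏ l, ρ l (x l) := by
          intro x; ring
        rw [Finset.sum_congr rfl fun x _ => h1 x,
          RVG_double s ρ hp hij (fun t => ((t : ℝ) - RVGm (s i) (ρ i)) ^ 2)
            (fun t => (t : ℝ) - RVGm (s j) (ρ j)),
          RVG_c1 (s j) (ρ j) (hp j), mul_zero]
      · rw [RVG_triple s ρ hp hij hjk hik (fun t => (t : ℝ) - RVGm (s i) (ρ i))
            (fun t => (t : ℝ) - RVGm (s j) (ρ j)) (fun t => (t : ℝ) - RVGm (s k) (ρ k)),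
          RVG_c1 (s i) (ρ i) (hp i), zero_mul, zero_mul]

lemma RVG_M3 (hp : ∀ i, ∑ y ∈ s i, ρ i y = 1) :
    ∑ x ∈ Fintype.piFinset s, (∑ i, ((x i : ℝ) - RVGm (s i) (ρ i))) ^ 3 * ∏ l, ρ l (x l)
      = ∑ i, RVGc (s i) (ρ i) 3 := by
  have e : ∀ x : Fin ℓ → ℤ, (∑ i, ((x i : ℝ) - RVGm (s i) (ρ i))) ^ 3
      = ∑ i, ∑ j, ∑ k, ((x i : ℝ) - RVGm (s i) (ρ i)) * ((x j : ℝ) - RVGm (s j) (ρ j))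
          * ((x k : ℝ) - RVGm (s k) (ρ k)) := by
    intro x
    rw [pow_succ, sq, Finset.sum_mul_sum]
    rw [Finset.sum_mul]
    refine Finset.sum_congr rfl fun i _ => ?_
    rw [Finset.sum_mul]
    exact Finset.sum_congr rfl fun j _ => Finset.mul_sum _ _ _
  rw [Finset.sum_congr rfl fun x _ => by rw [e x]]
  simp only [Finset.sum_mul]
  rw [Finset.sum_comm]
  trans (∑ i, ∑ j, ∑ k, if i = j ∧ j = k then RVGc (s i) (ρ i) 3 else 0)
  · refine Finset.sum_congr rfl fun i _ => ?_
    rw [Finset.sum_comm]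
    refine Finset.sum_congr rfl fun j _ => ?_
    rw [Finset.sum_comm]
    exact Finset.sum_congr rfl fun k _ => RVG_C3 s ρ hp i j k
  · refine Finset.sum_congr rfl fun i _ => ?_
    rw [show (∑ j, ∑ k, if i = j ∧ j = k then RVGc (s i) (ρ i) 3 else 0)
        = ∑ j, if i = j then RVGc (s i) (ρ i) 3 else 0 from
      Finset.sum_congr rfl fun j _ => by by_cases h : i = j <;> simp [h]]
    simp


lemma RVG_fmean (t : Finset ℤ) (r : ℤ → ℝ) (hs : ∀ y, r y ≠ 0 → y ∈ t) :
    fmean r = RVGm t r := by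
  refine finsum_eq_sum_of_support_subset _ fun y hy => ?_
  have : r y ≠ 0 := by
    intro h0
    simp [Function.mem_support, h0] at hy
  exact Finset.mem_coe.mpr (hs y this)

lemma RVG_fvar (t : Finset ℤ) (r : ℤ → ℝ) (hs : ∀ y, r y ≠ 0 → y ∈ t) :
    fvar r = RVGc t r 2 := by
  rw [fvar, RVG_fmean t r hs]
  refine finsum_eq_sum_of_support_subset _ fun y hy => ?_
  have : r y ≠ 0 := by
    intro h0
    simp [Function.mem_support, h0] at hy
  exact Finset.mem_coe.mpr (hs y this)

lemma RVG_prodsupp (hsupp : ∀ i y, ρ i y ≠ 0 → y ∈ s i) :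
    ∀ x : Fin ℓ → ℤ, (∏ l, ρ l (x l)) ≠ 0 → x ∈ Fintype.piFinset s := by
  intro x hx
  rw [Fintype.mem_piFinset]
  intro i
  exact hsupp i (x i) (Finset.prod_ne_zero_iff.mp hx i (Finset.mem_univ i))

lemma RVG_prod_fitMean (hsupp : ∀ i y, ρ i y ≠ 0 → y ∈ s i)
    (hp : ∀ i, ∑ y ∈ s i, ρ i y = 1) :
    fitMean (fun x => ∏ l, ρ l (x l)) = ∑ i, RVGm (s i) (ρ i) := by
  rw [fitMean]
  have conv : (∑ᶠ x : Fin ℓ → ℤ, fitness x * ∏ l, ρ l (x l))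
      = ∑ x ∈ Fintype.piFinset s, fitness x * ∏ l, ρ l (x l) := by
    refine finsum_eq_sum_of_support_subset _ fun x hx => ?_
    have : (∏ l, ρ l (x l)) ≠ 0 := by
      intro h0
      simp [Function.mem_support, h0] at hx
    exact Finset.mem_coe.mpr (RVG_prodsupp s ρ hsupp x this)
  rw [conv, Finset.sum_congr rfl fun x _ => by rw [RVG_fitness x]]
  exact RVG_mean s ρ hp

lemma RVG_prod_fitVar (hsupp : ∀ i y, ρ i y ≠ 0 → y ∈ s i)
    (hp : ∀ i, ∑ y ∈ s i, ρ i y = 1) :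
    fitVar (fun x => ∏ l, ρ l (x l)) = ∑ i, RVGc (s i) (ρ i) 2 := by
  rw [fitVar, RVG_prod_fitMean s ρ hsupp hp]
  have conv : (∑ᶠ x : Fin ℓ → ℤ,
        (fitness x - ∑ i, RVGm (s i) (ρ i)) ^ 2 * ∏ l, ρ l (x l))
      = ∑ x ∈ Fintype.piFinset s,
          (fitness x - ∑ i, RVGm (s i) (ρ i)) ^ 2 * ∏ l, ρ l (x l) := by
    refine finsum_eq_sum_of_support_subset _ fun x hx => ?_
    have : (∏ l, ρ l (x l)) ≠ 0 := by
      intro h0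
      simp [Function.mem_support, h0] at hx
    exact Finset.mem_coe.mpr (RVG_prodsupp s ρ hsupp x this)
  rw [conv]
  have pt : ∀ x : Fin ℓ → ℤ, (fitness x - ∑ i, RVGm (s i) (ρ i)) ^ 2
      = (∑ i, ((x i : ℝ) - RVGm (s i) (ρ i))) ^ 2 := by
    intro x
    rw [RVG_fitness x, Finset.sum_sub_distrib]
  rw [Finset.sum_congr rfl fun x _ => by rw [pt x]]
  exact RVG_M2 s ρ hp

end RVGAux

/-- Theorem 1 of the paper: starting from a population at linkage
equilibrium, after selection the effect of recombination on fitness variance is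
`V(Rec(φ*)) − V(φ*) = (Σ_{i≠j} VᵢVⱼ)/M² ≥ 0`, i.e. `LD₂(φ*) = −(Σ_{i≠j} VᵢVⱼ)/M² ≤ 0`. -/
theorem recombination_variance_gain (ℓ : ℕ) (φi : Fin ℓ → ℤ → ℝ)
    (hnn : ∀ i x, 0 ≤ φi i x)
    (hfin : ∀ i, (Function.support (φi i)).Finite)
    (hsum : ∀ i, ∑ᶠ x : ℤ, φi i x = 1)
    (φ : (Fin ℓ → ℤ) → ℝ) (hφ : φ = fun x => ∏ i, φi i (x i))
    (M : ℝ) (hM : M = fitMean φ) (hMpos : 0 < M)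
    (V : Fin ℓ → ℝ) (hVi : ∀ i, V i = fvar (φi i))
    (φStar : (Fin ℓ → ℤ) → ℝ) (hφStar : φStar = fun x => (fitness x / M) * φ x) :
    fitVar (recomb φStar) - fitVar φStar
        = (∑ i, ∑ j, if i ≠ j then V i * V j else 0) / M ^ 2
    ∧ 0 ≤ fitVar (recomb φStar) - fitVar φStar := by
  classical
  have hM0 : M ≠ 0 := ne_of_gt hMpos
  set s : Fin ℓ → Finset ℤ := fun i => (hfin i).toFinset with hsdef
  have hsupp : ∀ i y, φi i y ≠ 0 → y ∈ s i := fun i y h => (hfin i).mem_toFinset.mpr h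
  have hp : ∀ i, ∑ y ∈ s i, φi i y = 1 := by
    intro i
    rw [← hsum i]
    exact (finsum_eq_sum_of_support_subset _ fun y hy =>
      Finset.mem_coe.mpr (hsupp i y hy)).symm
  have hVW : ∀ i, V i = RVGc (s i) (φi i) 2 :=
    fun i => (hVi i).trans (RVG_fvar (s i) (φi i) (hsupp i))
  have hMm : M = ∑ i, RVGm (s i) (φi i) := by
    rw [hM, hφ]; exact RVG_prod_fitMean s φi hsupp hp
  set s2 : ℝ := ∑ i, RVGc (s i) (φi i) 2 with hs2def
  set k3 : ℝ := ∑ i, RVGc (s i) (φi i) 3 with hk3def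
  -- central moments of fitness under φ
  have hd : ∀ x : Fin ℓ → ℤ, fitness x - M = ∑ i, ((x i : ℝ) - RVGm (s i) (φi i)) := by
    intro x
    rw [RVG_fitness x, hMm, Finset.sum_sub_distrib]
  have A0 : ∑ x ∈ Fintype.piFinset s, (∏ l, φi l (x l)) = 1 := RVG_norm s φi hp
  have A1 : ∑ x ∈ Fintype.piFinset s, (fitness x - M) * ∏ l, φi l (x l) = 0 := by
    rw [Finset.sum_congr rfl fun x _ => by rw [hd x]]
    exact RVG_M1 s φi hp
  have A2 : ∑ x ∈ Fintype.piFinset s, (fitness x - M) ^ 2 * ∏ l, φi l (x l) = s2 := by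
    rw [Finset.sum_congr rfl fun x _ => by rw [hd x]]
    exact RVG_M2 s φi hp
  have A3 : ∑ x ∈ Fintype.piFinset s, (fitness x - M) ^ 3 * ∏ l, φi l (x l) = k3 := by
    rw [Finset.sum_congr rfl fun x _ => by rw [hd x]]
    exact RVG_M3 s φi hp
  have hsuppStar : ∀ x : Fin ℓ → ℤ, φStar x ≠ 0 → x ∈ Fintype.piFinset s := by
    intro x hx
    rw [hφStar] at hx
    simp only at hx
    have : φ x ≠ 0 := right_ne_zero_of_mul hx
    rw [hφ] at this
    exact RVG_prodsupp s φi hsupp x this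
  -- mean fitness after selection
  have MeanStar : fitMean φStar = M + s2 / M := by
    rw [fitMean]
    have conv : (∑ᶠ x : Fin ℓ → ℤ, fitness x * φStar x)
        = ∑ x ∈ Fintype.piFinset s, fitness x * φStar x := by
      refine finsum_eq_sum_of_support_subset _ fun x hx => ?_
      have : φStar x ≠ 0 := right_ne_zero_of_mul hx
      exact Finset.mem_coe.mpr (hsuppStar x this)
    rw [conv]
    have pt : ∀ x : Fin ℓ → ℤ, fitness x * φStar x
        = (0 * (fitness x - M) ^ 3 + (1 / M) * (fitness x - M) ^ 2 + 2 * (fitness x - M) + M)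
            * ∏ l, φi l (x l) := by
      intro x
      rw [hφStar, hφ]
      simp only
      field_simp
      ring
    rw [Finset.sum_congr rfl fun x _ => pt x,
      RVG_combo (Fintype.piFinset s) (fun x => ∏ l, φi l (x l)) (fun x => fitness x - M)
        1 0 s2 k3 0 (1 / M) 2 M A0 A1 A2 A3]
    field_simp
    ring
  -- fitness variance after selection
  have VarStar : fitVar φStar = s2 + k3 / M - s2 ^ 2 / M ^ 2 := by
    rw [fitVar, MeanStar]
    have conv : (∑ᶠ x : Fin ℓ → ℤ, (fitness x - (M + s2 / M)) ^ 2 * φStar x)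
        = ∑ x ∈ Fintype.piFinset s, (fitness x - (M + s2 / M)) ^ 2 * φStar x := by
      refine finsum_eq_sum_of_support_subset _ fun x hx => ?_
      have : φStar x ≠ 0 := right_ne_zero_of_mul hx
      exact Finset.mem_coe.mpr (hsuppStar x this)
    rw [conv]
    have pt : ∀ x : Fin ℓ → ℤ, (fitness x - (M + s2 / M)) ^ 2 * φStar x
        = ((1 / M) * (fitness x - M) ^ 3 + ((M - 2 * (s2 / M)) / M) * (fitness x - M) ^ 2
            + (((s2 / M) ^ 2 - 2 * (s2 / M) * M) / M) * (fitness x - M) + (s2 / M) ^ 2)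
            * ∏ l, φi l (x l) := by
      intro x
      rw [hφStar, hφ]
      simp only
      field_simp
      ring
    rw [Finset.sum_congr rfl fun x _ => pt x,
      RVG_combo (Fintype.piFinset s) (fun x => ∏ l, φi l (x l)) (fun x => fitness x - M)
        1 0 s2 k3 (1 / M) ((M - 2 * (s2 / M)) / M) (((s2 / M) ^ 2 - 2 * (s2 / M) * M) / M)
        ((s2 / M) ^ 2) A0 A1 A2 A3]
    field_simp
    ring
  -- marginal of the selected distribution
  have hmarg : ∀ (i : Fin ℓ) (y : ℤ),
      marginal φStar i y = φi i y * (((y : ℝ) + (M - RVGm (s i) (φi i))) / M) := by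
    intro i y
    rw [marginal]
    have conv : (∑ᶠ x : Fin ℓ → ℤ, if x i = y then φStar x else 0)
        = ∑ x ∈ Fintype.piFinset s, if x i = y then φStar x else 0 := by
      refine finsum_eq_sum_of_support_subset _ fun x hx => ?_
      have hne : φStar x ≠ 0 := by
        intro h0
        simp only [Function.mem_support, h0, ite_self, ne_eq, not_true_eq_false] at hx
      exact Finset.mem_coe.mpr (hsuppStar x hne)
    rw [conv]
    have pt : ∀ x : Fin ℓ → ℤ, (if x i = y then φStar x else 0)
        = (1 / M) * ∑ j, (if x i = y then (1 : ℝ) else 0) * ((x j : ℝ))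
            * ∏ l, φi l (x l) := by
      intro x
      rw [hφStar, hφ]
      simp only [RVG_fitness]
      split
      · have e1 : ∀ j : Fin ℓ, (1 : ℝ) * ((x j : ℝ)) * ∏ l, φi l (x l)
            = ((x j : ℝ)) * ∏ l, φi l (x l) := fun j => by ring
        rw [Finset.sum_congr rfl fun j _ => e1 j, ← Finset.sum_mul]
        field_simp
      · simp
    rw [Finset.sum_congr rfl fun x _ => pt x, ← Finset.mul_sum, Finset.sum_comm]
    have inner : ∀ j : Fin ℓ,
        (∑ x ∈ Fintype.piFinset s, (if x i = y then (1 : ℝ) else 0) * ((x j : ℝ))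
            * ∏ l, φi l (x l))
        = if j = i then (y : ℝ) * φi i y else φi i y * RVGm (s j) (φi j) := by
      intro j
      by_cases hj : j = i
      · subst hj
        rw [if_pos rfl]
        have h1 : ∀ x : Fin ℓ → ℤ, (if x j = y then (1 : ℝ) else 0) * ((x j : ℝ))
              * ∏ l, φi l (x l)
            = ((if x j = y then (1 : ℝ) else 0) * ((x j : ℝ))) * ∏ l, φi l (x l) :=
          fun x => by ring
        rw [Finset.sum_congr rfl fun x _ => h1 x,
          RVG_single s φi hp j fun t => (if t = y then (1 : ℝ) else 0) * ((t : ℝ))]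
        have h2 : ∀ t : ℤ, ((if t = y then (1 : ℝ) else 0) * ((t : ℝ))) * φi j t
            = if t = y then (y : ℝ) * φi j t else 0 := by
          intro t
          by_cases h : t = y
          · subst h; simp
          · simp [h]
        rw [Finset.sum_congr rfl fun t _ => h2 t,
          Finset.sum_ite_eq' (s j) y fun t => (y : ℝ) * φi j t]
        by_cases hy : y ∈ s j
        · rw [if_pos hy]
        · rw [if_neg hy]
          have h0 : φi j y = 0 := by
            by_contra h
            exact hy (hsupp j y h)
          rw [h0, mul_zero]
      · rw [if_neg hj]
        have hij : i ≠ j := fun h => hj h.symm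
        rw [RVG_double s φi hp hij (fun t => if t = y then (1 : ℝ) else 0)
          (fun t => (t : ℝ))]
        have h2 : (∑ t ∈ s i, (if t = y then (1 : ℝ) else 0) * φi i t) = φi i y := by
          have h3 : ∀ t : ℤ, (if t = y then (1 : ℝ) else 0) * φi i t
              = if t = y then φi i t else 0 := fun t => by split <;> simp
          rw [Finset.sum_congr rfl fun t _ => h3 t, Finset.sum_ite_eq' (s i) y (φi i)]
          by_cases hy : y ∈ s i
          · rw [if_pos hy]
          · rw [if_neg hy]
            have h0 : φi i y = 0 := by
              by_contra h
              exact hy (hsupp i y h)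
            rw [h0]
        rw [h2]
        rfl
    rw [Finset.sum_congr rfl fun j _ => inner j]
    have split2 : ∀ j : Fin ℓ, (if j = i then (y : ℝ) * φi i y else φi i y * RVGm (s j) (φi j))
        = φi i y * RVGm (s j) (φi j)
          + (if j = i then (y : ℝ) * φi i y - φi i y * RVGm (s i) (φi i) else 0) := by
      intro j
      by_cases h : j = i
      · subst h; simp
      · simp [h]
    rw [Finset.sum_congr rfl fun j _ => split2 j, Finset.sum_add_distrib, ← Finset.mul_sum,
      Finset.sum_ite_eq' Finset.univ i fun _ => (y : ℝ) * φi i y - φi i y * RVGm (s i) (φi i)]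
    simp only [Finset.mem_univ, if_true]
    rw [← hMm]
    field_simp
    ring
  -- the marginals of φStar
  set ψm : Fin ℓ → ℤ → ℝ :=
    fun i y => φi i y * (((y : ℝ) + (M - RVGm (s i) (φi i))) / M) with hψmdef
  have hrec : recomb φStar = fun x => ∏ l, ψm l (x l) := by
    funext x
    simp only [recomb]
    exact Finset.prod_congr rfl fun i _ => hmarg i (x i)
  have hsupp' : ∀ i y, ψm i y ≠ 0 → y ∈ s i := by
    intro i y h
    apply hsupp i y
    intro h0
    apply h
    simp [hψmdef, h0]
  have hp' : ∀ i, ∑ y ∈ s i, ψm i y = 1 := by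
    intro i
    have key := RVG_combo (s i) (φi i) (fun y => (y : ℝ) - RVGm (s i) (φi i))
      1 0 (RVGc (s i) (φi i) 2) (RVGc (s i) (φi i) 3) 0 0 (1 / M) 1
      (hp i) (RVG_c1 (s i) (φi i) (hp i)) rfl rfl
    have pt : ∀ y : ℤ, ψm i y
        = (0 * ((y : ℝ) - RVGm (s i) (φi i)) ^ 3 + 0 * ((y : ℝ) - RVGm (s i) (φi i)) ^ 2
            + (1 / M) * ((y : ℝ) - RVGm (s i) (φi i)) + 1) * φi i y := by
      intro y
      simp only [hψmdef]
      field_simp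
      ring
    rw [Finset.sum_congr rfl fun y _ => pt y, key]
    norm_num
  have hmean' : ∀ i, RVGm (s i) (ψm i)
      = RVGm (s i) (φi i) + RVGc (s i) (φi i) 2 / M := by
    intro i
    have key := RVG_combo (s i) (φi i) (fun y => (y : ℝ) - RVGm (s i) (φi i))
      1 0 (RVGc (s i) (φi i) 2) (RVGc (s i) (φi i) 3) 0 (1 / M)
      ((RVGm (s i) (φi i) + M) / M) (RVGm (s i) (φi i))
      (hp i) (RVG_c1 (s i) (φi i) (hp i)) rfl rfl
    have pt : ∀ y : ℤ, (y : ℝ) * ψm i y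
        = (0 * ((y : ℝ) - RVGm (s i) (φi i)) ^ 3 + (1 / M) * ((y : ℝ) - RVGm (s i) (φi i)) ^ 2
            + ((RVGm (s i) (φi i) + M) / M) * ((y : ℝ) - RVGm (s i) (φi i))
            + RVGm (s i) (φi i)) * φi i y := by
      intro y
      simp only [hψmdef]
      field_simp
      ring
    have : RVGm (s i) (ψm i) = ∑ y ∈ s i, (y : ℝ) * ψm i y := rfl
    rw [this, Finset.sum_congr rfl fun y _ => pt y, key]
    field_simp
    ring
  have hvar' : ∀ i, RVGc (s i) (ψm i) 2
      = RVGc (s i) (φi i) 2 + RVGc (s i) (φi i) 3 / M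
        - (RVGc (s i) (φi i) 2) ^ 2 / M ^ 2 := by
    intro i
    have key := RVG_combo (s i) (φi i) (fun y => (y : ℝ) - RVGm (s i) (φi i))
      1 0 (RVGc (s i) (φi i) 2) (RVGc (s i) (φi i) 3) (1 / M)
      ((M - 2 * (RVGc (s i) (φi i) 2 / M)) / M)
      (((RVGc (s i) (φi i) 2 / M) ^ 2 - 2 * (RVGc (s i) (φi i) 2 / M) * M) / M)
      ((RVGc (s i) (φi i) 2 / M) ^ 2)
      (hp i) (RVG_c1 (s i) (φi i) (hp i)) rfl rfl
    have pt : ∀ y : ℤ, ((y : ℝ) - RVGm (s i) (ψm i)) ^ 2 * ψm i y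
        = ((1 / M) * ((y : ℝ) - RVGm (s i) (φi i)) ^ 3
            + ((M - 2 * (RVGc (s i) (φi i) 2 / M)) / M) * ((y : ℝ) - RVGm (s i) (φi i)) ^ 2
            + ((((RVGc (s i) (φi i) 2 / M) ^ 2 - 2 * (RVGc (s i) (φi i) 2 / M) * M)) / M)
                * ((y : ℝ) - RVGm (s i) (φi i))
            + (RVGc (s i) (φi i) 2 / M) ^ 2) * φi i y := by
      intro y
      rw [hmean' i]
      simp only [hψmdef]
      field_simp
      ring
    have e0 : RVGc (s i) (ψm i) 2 = ∑ y ∈ s i, ((y : ℝ) - RVGm (s i) (ψm i)) ^ 2 * ψm i y := rfl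
    rw [e0, Finset.sum_congr rfl fun y _ => pt y, key]
    field_simp
    ring
  have hrecVar : fitVar (recomb φStar)
      = s2 + k3 / M - (∑ i, (RVGc (s i) (φi i) 2) ^ 2) / M ^ 2 := by
    rw [hrec, RVG_prod_fitVar s ψm hsupp' hp',
      Finset.sum_congr rfl fun i _ => hvar' i]
    rw [hs2def, hk3def]
    simp only [Finset.sum_add_distrib, Finset.sum_sub_distrib, ← Finset.sum_div]
  have diff : fitVar (recomb φStar) - fitVar φStar
      = (s2 ^ 2 - ∑ i, (RVGc (s i) (φi i) 2) ^ 2) / M ^ 2 := by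
    rw [hrecVar, VarStar]
    field_simp
    ring
  have hVsum : (∑ i, ∑ j, if i ≠ j then V i * V j else 0)
      = s2 ^ 2 - ∑ i, (RVGc (s i) (φi i) 2) ^ 2 := by
    simp only [hVW]
    rw [hs2def, sq, Finset.sum_mul_sum, ← Finset.sum_sub_distrib]
    refine Finset.sum_congr rfl fun i _ => ?_
    have step : ∀ j : Fin ℓ, (if i ≠ j then (RVGc (s i) (φi i) 2) * (RVGc (s j) (φi j) 2) else 0)
        = RVGc (s i) (φi i) 2 * RVGc (s j) (φi j) 2
          - (if j = i then RVGc (s i) (φi i) 2 * RVGc (s j) (φi j) 2 else 0) := by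
      intro j
      by_cases h : j = i
      · subst h; simp
      · have h' : i ≠ j := fun hh => h hh.symm
        simp [h, h']
    rw [Finset.sum_congr rfl fun j _ => step j, Finset.sum_sub_distrib,
      Finset.sum_ite_eq' Finset.univ i
        fun j => RVGc (s i) (φi i) 2 * RVGc (s j) (φi j) 2]
    simp [sq]
  have hV0 : ∀ i, 0 ≤ V i := by
    intro i
    rw [hVi i]
    unfold fvar
    exact finsum_nonneg fun y => mul_nonneg (sq_nonneg _) (hnn i y)
  have hpos : 0 ≤ (∑ i, ∑ j, if i ≠ j then V i * V j else 0) / M ^ 2 := by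
    apply div_nonneg
    · refine Finset.sum_nonneg fun i _ => Finset.sum_nonneg fun j _ => ?_
      split
      · exact mul_nonneg (hV0 i) (hV0 j)
      · exact le_refl 0
    · positivity
  constructor
  · rw [diff, hVsum]
  · rw [diff, ← hVsum]
    exact hpos
end

section
/- Define, for probability distributions ψ₁, ψ₂ on ℤ, ψ₂ ≼ ψ₁ iff for all b₁ < b₂ in ℤ, ψ₁(b₁)ψ₂(b₂) ≤ ψ₁(b₂)ψ₂(b₁). Let μ be a mutation distribution supported on {−1,0,1} with μ(0) > μ(−1) > μ(1), and let Mut(ψ)(x) = Σ_d ψ(d)μ(x − d). Then ψ₂ ≼ ψ₁ implies Mut(ψ₂) ≼ Mut(ψ₁). -/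
open scoped BigOperators

/-- Likelihood-ratio order: `ψ₂ ≼ ψ₁`. -/
def preceq (ψ₂ ψ₁ : ℤ → ℝ) : Prop :=
  ∀ b₁ b₂ : ℤ, b₁ < b₂ → ψ₁ b₁ * ψ₂ b₂ ≤ ψ₁ b₂ * ψ₂ b₁

/-- Mutation: convolution with the mutation distribution `μ`. -/
noncomputable def mutate (μ : ℤ → ℝ) (ψ : ℤ → ℝ) : ℤ → ℝ :=
  fun x => ∑ᶠ d : ℤ, ψ d * μ (x - d)

/-- Lemma: mutation preserves `≼`: if `μ` is supported on
`{−1,0,1}` with `μ(0) > μ(−1) > μ(1) ≥ 0` then `ψ₂ ≼ ψ₁` implies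
`Mut(ψ₂) ≼ Mut(ψ₁)`. -/
theorem mutation_preserves_preceq (μ ψ₁ ψ₂ : ℤ → ℝ)
    (hμsupp : ∀ x : ℤ, x ≠ -1 → x ≠ 0 → x ≠ 1 → μ x = 0)
    (hμsum : μ (-1) + μ 0 + μ 1 = 1)
    (hμ1 : 0 ≤ μ 1) (hμ01 : μ 1 < μ (-1)) (hμ0 : μ (-1) < μ 0)
    (h₁nn : ∀ x, 0 ≤ ψ₁ x) (h₂nn : ∀ x, 0 ≤ ψ₂ x)
    (h₁fin : (Function.support ψ₁).Finite) (h₂fin : (Function.support ψ₂).Finite)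
    (h₁sum : ∑ᶠ x : ℤ, ψ₁ x = 1) (h₂sum : ∑ᶠ x : ℤ, ψ₂ x = 1)
    (h : preceq ψ₂ ψ₁) :
    preceq (mutate μ ψ₂) (mutate μ ψ₁) := by
  -- nonnegativity of μ everywhere
  have μnn : ∀ x : ℤ, 0 ≤ μ x := by
    intro x
    by_cases h1 : x = -1
    · subst h1; linarith
    by_cases h2 : x = 0
    · subst h2; linarith
    by_cases h3 : x = 1
    · subst h3; exact hμ1
    · rw [hμsupp x h1 h2 h3]
  -- TP2 / log-concavity property of μ
  have key : ∀ b₁ b₂ d e : ℤ, b₁ < b₂ → d < e →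
      μ (b₁ - e) * μ (b₂ - d) ≤ μ (b₁ - d) * μ (b₂ - e) := by
    intro b₁ b₂ d e hb hde
    by_cases hp : b₁ - e = -1 ∨ b₁ - e = 0 ∨ b₁ - e = 1
    · by_cases hq : b₂ - d = -1 ∨ b₂ - d = 0 ∨ b₂ - d = 1
      · rcases hp with hp | hp | hp <;> rcases hq with hq | hq | hq <;>
          first
          | omega
          | (have h1 : b₁ - d = 0 := by omega
             have h2 : b₂ - e = 0 := by omega
             rw [hp, hq, h1, h2]
             nlinarith [hμ1, hμ01, hμ0])
      · push_neg at hq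
        rw [hμsupp _ hq.1 hq.2.1 hq.2.2, mul_zero]
        exact mul_nonneg (μnn _) (μnn _)
    · push_neg at hp
      rw [hμsupp _ hp.1 hp.2.1 hp.2.2, zero_mul]
      exact mul_nonneg (μnn _) (μnn _)
  intro b₁ b₂ hb
  classical
  set S : Finset ℤ := h₁fin.toFinset ∪ h₂fin.toFinset with hSdef
  have h₁S : Function.support ψ₁ ⊆ ↑S := by
    intro x hx
    simp [hSdef, Set.Finite.mem_toFinset, hx]
  have h₂S : Function.support ψ₂ ⊆ ↑S := by
    intro x hx
    simp [hSdef, Set.Finite.mem_toFinset, hx]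
  have hmut : ∀ (ψ : ℤ → ℝ), Function.support ψ ⊆ ↑S → ∀ x : ℤ,
      mutate μ ψ x = ∑ d ∈ S, ψ d * μ (x - d) := by
    intro ψ hsupp x
    apply finsum_eq_finset_sum_of_support_subset
    intro d hd
    apply hsupp
    intro h0
    simp only [Function.mem_support] at hd
    exact hd (by rw [h0, zero_mul])
  rw [hmut ψ₁ h₁S, hmut ψ₁ h₁S, hmut ψ₂ h₂S, hmut ψ₂ h₂S]
  rw [← sub_nonneg]
  set T : ℤ → ℤ → ℝ := fun d e =>
    ψ₁ d * μ (b₂ - d) * (ψ₂ e * μ (b₁ - e)) - ψ₁ d * μ (b₁ - d) * (ψ₂ e * μ (b₂ - e))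
    with hT
  have expand : (∑ d ∈ S, ψ₁ d * μ (b₂ - d)) * (∑ e ∈ S, ψ₂ e * μ (b₁ - e)) -
      (∑ d ∈ S, ψ₁ d * μ (b₁ - d)) * (∑ e ∈ S, ψ₂ e * μ (b₂ - e)) =
      ∑ d ∈ S, ∑ e ∈ S, T d e := by
    rw [Finset.sum_mul_sum, Finset.sum_mul_sum, ← Finset.sum_sub_distrib]
    exact Finset.sum_congr rfl fun d _ => by rw [← Finset.sum_sub_distrib]
  rw [expand]
  have hTT : ∀ d e : ℤ, 0 ≤ T d e + T e d := by
    intro d e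
    rcases lt_trichotomy d e with hde | hde | hde
    · have hA := h d e hde
      have hB := key b₁ b₂ d e hb hde
      have hprod : 0 ≤ (ψ₁ e * ψ₂ d - ψ₁ d * ψ₂ e) *
          (μ (b₁ - d) * μ (b₂ - e) - μ (b₁ - e) * μ (b₂ - d)) :=
        mul_nonneg (by linarith) (by linarith)
      simp only [hT]
      nlinarith [hprod]
    · subst hde
      simp only [hT]
      ring_nf
      exact le_of_eq (by ring)
    · have hA := h e d hde
      have hB := key b₁ b₂ e d hb hde
      have hprod : 0 ≤ (ψ₁ d * ψ₂ e - ψ₁ e * ψ₂ d) *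
          (μ (b₁ - e) * μ (b₂ - d) - μ (b₁ - d) * μ (b₂ - e)) :=
        mul_nonneg (by linarith) (by linarith)
      simp only [hT]
      nlinarith [hprod]
  have hsym : ∑ d ∈ S, ∑ e ∈ S, T e d = ∑ d ∈ S, ∑ e ∈ S, T d e := Finset.sum_comm
  have hadd : ∑ d ∈ S, ∑ e ∈ S, (T d e + T e d) =
      (∑ d ∈ S, ∑ e ∈ S, T d e) + (∑ d ∈ S, ∑ e ∈ S, T e d) := by
    simp [Finset.sum_add_distrib]
  have hpos : 0 ≤ ∑ d ∈ S, ∑ e ∈ S, (T d e + T e d) :=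
    Finset.sum_nonneg fun d _ => Finset.sum_nonneg fun e _ => hTT d e
  linarith [hpos, hadd, hsym]
end

section
/- Define ψ₂ ≼ ψ₁ iff for all b₁ < b₂ in ℤ, ψ₁(b₁)ψ₂(b₂) ≤ ψ₁(b₂)ψ₂(b₁), and ψ₂ ≺ ψ₁ if moreover strict inequality holds for some pair b₁ < b₂. For W ∈ ℝ, define Sel_W(φ)(x) = (x + W)φ(x)/s with s = E[φ] + W, assuming x + W > 0 on the supports. If W₁ ≤ W₂ and ψ₂ ≼ ψ₁, then Sel_{W₂}(ψ₂) ≼ Sel_{W₁}(ψ₁). Moreover if W₁ < W₂, ψ₂ ≼ ψ₁, and at least one of ψ₁, ψ₂ has support of size greater than one, then Sel_{W₂}(ψ₂) ≺ Sel_{W₁}(ψ₁). -/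
open scoped BigOperators

/-- Strict likelihood-ratio order: `ψ₂ ≺ ψ₁`. -/
def precLt (ψ₂ ψ₁ : ℤ → ℝ) : Prop :=
  preceq ψ₂ ψ₁ ∧ ∃ b₁ b₂ : ℤ, b₁ < b₂ ∧ ψ₁ b₁ * ψ₂ b₂ < ψ₁ b₂ * ψ₂ b₁

/-- A distribution is non-trivial if its support has more than one point. -/
def NonTrivial (ψ : ℤ → ℝ) : Prop := ∃ x y : ℤ, x ≠ y ∧ ψ x ≠ 0 ∧ ψ y ≠ 0

/-- The weighted selection operator `Sel_W(φ)(x) = (x+W)·φ(x)/(E[φ]+W)`. -/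
noncomputable def selW (W : ℝ) (φ : ℤ → ℝ) : ℤ → ℝ :=
  fun x => ((x : ℝ) + W) * φ x / (fmean φ + W)

private lemma support_ne (ψ : ℤ → ℝ) (hs : ∑ᶠ x : ℤ, ψ x = 1) : ∃ x, ψ x ≠ 0 := by
  by_contra hc
  push_neg at hc
  rw [finsum_eq_zero_of_forall_eq_zero hc] at hs
  norm_num at hs

private lemma key_le (ψ₁ ψ₂ : ℤ → ℝ) (W₁ W₂ : ℝ)
    (h₁nn : ∀ x, 0 ≤ ψ₁ x) (h₂nn : ∀ x, 0 ≤ ψ₂ x)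
    (h₁pos : ∀ x : ℤ, ψ₁ x ≠ 0 → 0 < (x : ℝ) + W₁)
    (h₂pos : ∀ x : ℤ, ψ₂ x ≠ 0 → 0 < (x : ℝ) + W₂)
    (h : preceq ψ₂ ψ₁) (hW : W₁ ≤ W₂) {b₁ b₂ : ℤ} (hb : b₁ < b₂) :
    ((b₁:ℝ)+W₁) * ψ₁ b₁ * (((b₂:ℝ)+W₂) * ψ₂ b₂) ≤
      ((b₂:ℝ)+W₁) * ψ₁ b₂ * (((b₁:ℝ)+W₂) * ψ₂ b₁) := by
  have hbR : (b₁:ℝ) < b₂ := by exact_mod_cast hb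
  by_cases h0 : ψ₁ b₁ * ψ₂ b₂ = 0
  · have hL : ((b₁:ℝ)+W₁) * ψ₁ b₁ * (((b₂:ℝ)+W₂) * ψ₂ b₂) = 0 := by
      rcases mul_eq_zero.1 h0 with h1 | h1 <;> simp [h1]
    rw [hL]
    by_cases hA : ψ₁ b₂ = 0
    · simp [hA]
    by_cases hB : ψ₂ b₁ = 0
    · simp [hB]
    exact mul_nonneg (mul_nonneg (h₁pos b₂ hA).le (h₁nn b₂))
      (mul_nonneg (h₂pos b₁ hB).le (h₂nn b₁))
  · have h1 : ψ₁ b₁ ≠ 0 := fun hz => h0 (by simp [hz])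
    have h2 : ψ₂ b₂ ≠ 0 := fun hz => h0 (by simp [hz])
    have hP : 0 < ψ₁ b₁ * ψ₂ b₂ :=
      mul_pos ((h₁nn b₁).lt_of_ne (Ne.symm h1)) ((h₂nn b₂).lt_of_ne (Ne.symm h2))
    have hPQ := h b₁ b₂ hb
    have hQ : 0 < ψ₁ b₂ * ψ₂ b₁ := lt_of_lt_of_le hP hPQ
    have h3 : ψ₁ b₂ ≠ 0 := fun hz => by rw [hz, zero_mul] at hQ; linarith
    have h4 : ψ₂ b₁ ≠ 0 := fun hz => by rw [hz, mul_zero] at hQ; linarith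
    have hA : (0:ℝ) < ((b₁:ℝ)+W₁) * ((b₂:ℝ)+W₂) :=
      mul_pos (h₁pos b₁ h1) (h₂pos b₂ h2)
    have hAB : ((b₁:ℝ)+W₁) * ((b₂:ℝ)+W₂) ≤ ((b₂:ℝ)+W₁) * ((b₁:ℝ)+W₂) := by nlinarith
    calc ((b₁:ℝ)+W₁) * ψ₁ b₁ * (((b₂:ℝ)+W₂) * ψ₂ b₂)
        = ((b₁:ℝ)+W₁) * ((b₂:ℝ)+W₂) * (ψ₁ b₁ * ψ₂ b₂) := by ring
      _ ≤ ((b₂:ℝ)+W₁) * ((b₁:ℝ)+W₂) * (ψ₁ b₂ * ψ₂ b₁) :=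
          mul_le_mul hAB hPQ hP.le (hA.le.trans hAB)
      _ = ((b₂:ℝ)+W₁) * ψ₁ b₂ * (((b₁:ℝ)+W₂) * ψ₂ b₁) := by ring

private lemma key_lt (ψ₁ ψ₂ : ℤ → ℝ) (W₁ W₂ : ℝ)
    (h₁nn : ∀ x, 0 ≤ ψ₁ x) (h₂nn : ∀ x, 0 ≤ ψ₂ x)
    (h₁pos : ∀ x : ℤ, ψ₁ x ≠ 0 → 0 < (x : ℝ) + W₁)
    (h₂pos : ∀ x : ℤ, ψ₂ x ≠ 0 → 0 < (x : ℝ) + W₂)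
    (h : preceq ψ₂ ψ₁) (hW : W₁ < W₂) {b₁ b₂ : ℤ} (hb : b₁ < b₂)
    (h4 : ψ₂ b₁ ≠ 0) (h3 : ψ₁ b₂ ≠ 0) :
    ((b₁:ℝ)+W₁) * ψ₁ b₁ * (((b₂:ℝ)+W₂) * ψ₂ b₂) <
      ((b₂:ℝ)+W₁) * ψ₁ b₂ * (((b₁:ℝ)+W₂) * ψ₂ b₁) := by
  have hbR : (b₁:ℝ) < b₂ := by exact_mod_cast hb
  have hQ : 0 < ψ₁ b₂ * ψ₂ b₁ :=
    mul_pos ((h₁nn b₂).lt_of_ne (Ne.symm h3)) ((h₂nn b₁).lt_of_ne (Ne.symm h4))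
  have hB : (0:ℝ) < ((b₂:ℝ)+W₁) * ((b₁:ℝ)+W₂) :=
    mul_pos (h₁pos b₂ h3) (h₂pos b₁ h4)
  by_cases h0 : ψ₁ b₁ * ψ₂ b₂ = 0
  · have hL : ((b₁:ℝ)+W₁) * ψ₁ b₁ * (((b₂:ℝ)+W₂) * ψ₂ b₂) = 0 := by
      rcases mul_eq_zero.1 h0 with h1 | h1 <;> simp [h1]
    rw [hL]
    have := mul_pos hB hQ
    nlinarith
  · have h1 : ψ₁ b₁ ≠ 0 := fun hz => h0 (by simp [hz])
    have h2 : ψ₂ b₂ ≠ 0 := fun hz => h0 (by simp [hz])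
    have hP : 0 < ψ₁ b₁ * ψ₂ b₂ :=
      mul_pos ((h₁nn b₁).lt_of_ne (Ne.symm h1)) ((h₂nn b₂).lt_of_ne (Ne.symm h2))
    have hPQ := h b₁ b₂ hb
    have hA : (0:ℝ) < ((b₁:ℝ)+W₁) * ((b₂:ℝ)+W₂) :=
      mul_pos (h₁pos b₁ h1) (h₂pos b₂ h2)
    have hAB : ((b₁:ℝ)+W₁) * ((b₂:ℝ)+W₂) < ((b₂:ℝ)+W₁) * ((b₁:ℝ)+W₂) := by nlinarith
    calc ((b₁:ℝ)+W₁) * ψ₁ b₁ * (((b₂:ℝ)+W₂) * ψ₂ b₂)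
        = ((b₁:ℝ)+W₁) * ((b₂:ℝ)+W₂) * (ψ₁ b₁ * ψ₂ b₂) := by ring
      _ ≤ ((b₁:ℝ)+W₁) * ((b₂:ℝ)+W₂) * (ψ₁ b₂ * ψ₂ b₁) :=
          mul_le_mul_of_nonneg_left hPQ hA.le
      _ < ((b₂:ℝ)+W₁) * ((b₁:ℝ)+W₂) * (ψ₁ b₂ * ψ₂ b₁) :=
          mul_lt_mul_of_pos_right hAB hQ
      _ = ((b₂:ℝ)+W₁) * ψ₁ b₂ * (((b₁:ℝ)+W₂) * ψ₂ b₁) := by ring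

private lemma exists_pair (ψ₁ ψ₂ : ℤ → ℝ)
    (h₁nn : ∀ x, 0 ≤ ψ₁ x) (h₂nn : ∀ x, 0 ≤ ψ₂ x)
    (h : preceq ψ₂ ψ₁)
    (hnt : NonTrivial ψ₁ ∨ NonTrivial ψ₂)
    (hs₁ : ∃ x, ψ₁ x ≠ 0) (hs₂ : ∃ x, ψ₂ x ≠ 0) :
    ∃ b₁ b₂ : ℤ, b₁ < b₂ ∧ ψ₂ b₁ ≠ 0 ∧ ψ₁ b₂ ≠ 0 := by
  rcases hnt with ⟨x, y, hxy, hx, hy⟩ | ⟨x, y, hxy, hx, hy⟩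
  · -- ψ₁ nontrivial
    obtain ⟨a, ha⟩ := hs₂
    -- wlog x < y
    rcases hxy.lt_or_gt with hlt | hlt
    case inr => exact (by
      rcases lt_or_ge a x with h' | h'
      · exact ⟨a, x, h', ha, hx⟩
      · have hya : y < a := lt_of_lt_of_le hlt h'
        have := h y a hya
        have hyz : 0 < ψ₁ y * ψ₂ a :=
          mul_pos ((h₁nn y).lt_of_ne (Ne.symm hy)) ((h₂nn a).lt_of_ne (Ne.symm ha))
        have hQ : 0 < ψ₁ a * ψ₂ y := lt_of_lt_of_le hyz this
        have h4 : ψ₂ y ≠ 0 := fun hz => by rw [hz, mul_zero] at hQ; linarith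
        exact ⟨y, x, hlt, h4, hx⟩)
    case inl =>
      rcases lt_or_ge a y with h' | h'
      · exact ⟨a, y, h', ha, hy⟩
      · have hxa : x < a := lt_of_lt_of_le hlt h'
        have := h x a hxa
        have hxz : 0 < ψ₁ x * ψ₂ a :=
          mul_pos ((h₁nn x).lt_of_ne (Ne.symm hx)) ((h₂nn a).lt_of_ne (Ne.symm ha))
        have hQ : 0 < ψ₁ a * ψ₂ x := lt_of_lt_of_le hxz this
        have h4 : ψ₂ x ≠ 0 := fun hz => by rw [hz, mul_zero] at hQ; linarith
        exact ⟨x, y, hlt, h4, hy⟩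
  · -- ψ₂ nontrivial
    obtain ⟨c, hc⟩ := hs₁
    rcases hxy.lt_or_gt with hlt | hlt
    case inr => exact (by
      rcases lt_or_ge y c with h' | h'
      · exact ⟨y, c, h', hy, hc⟩
      · have hcx : c < x := lt_of_le_of_lt h' hlt
        have := h c x hcx
        have hcz : 0 < ψ₁ c * ψ₂ x :=
          mul_pos ((h₁nn c).lt_of_ne (Ne.symm hc)) ((h₂nn x).lt_of_ne (Ne.symm hx))
        have hQ : 0 < ψ₁ x * ψ₂ c := lt_of_lt_of_le hcz this
        have h3 : ψ₁ x ≠ 0 := fun hz => by rw [hz, zero_mul] at hQ; linarith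
        exact ⟨y, x, hlt, hy, h3⟩)
    case inl =>
      rcases lt_or_ge x c with h' | h'
      · exact ⟨x, c, h', hx, hc⟩
      · have hcy : c < y := lt_of_le_of_lt h' hlt
        have := h c y hcy
        have hcz : 0 < ψ₁ c * ψ₂ y :=
          mul_pos ((h₁nn c).lt_of_ne (Ne.symm hc)) ((h₂nn y).lt_of_ne (Ne.symm hy))
        have hQ : 0 < ψ₁ y * ψ₂ c := lt_of_lt_of_le hcz this
        have h3 : ψ₁ y ≠ 0 := fun hz => by rw [hz, zero_mul] at hQ; linarith
        exact ⟨x, y, hlt, hx, h3⟩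

/-- Lemma: selection preserves `≼`: if `W₁ ≤ W₂` and `ψ₂ ≼ ψ₁`,
then `Sel_{W₂}(ψ₂) ≼ Sel_{W₁}(ψ₁)`; and if moreover `W₁ < W₂` and one of the
distributions is non-trivial, then `Sel_{W₂}(ψ₂) ≺ Sel_{W₁}(ψ₁)`. -/
theorem selection_preserves_preceq (ψ₁ ψ₂ : ℤ → ℝ) (W₁ W₂ : ℝ)
    (h₁nn : ∀ x, 0 ≤ ψ₁ x) (h₂nn : ∀ x, 0 ≤ ψ₂ x)
    (h₁fin : (Function.support ψ₁).Finite) (h₂fin : (Function.support ψ₂).Finite)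
    (h₁sum : ∑ᶠ x : ℤ, ψ₁ x = 1) (h₂sum : ∑ᶠ x : ℤ, ψ₂ x = 1)
    (h₁pos : ∀ x : ℤ, ψ₁ x ≠ 0 → 0 < (x : ℝ) + W₁)
    (h₂pos : ∀ x : ℤ, ψ₂ x ≠ 0 → 0 < (x : ℝ) + W₂)
    (h₁norm : 0 < fmean ψ₁ + W₁) (h₂norm : 0 < fmean ψ₂ + W₂)
    (h : preceq ψ₂ ψ₁) (hW : W₁ ≤ W₂) :
    preceq (selW W₂ ψ₂) (selW W₁ ψ₁)
    ∧ (W₁ < W₂ → (NonTrivial ψ₁ ∨ NonTrivial ψ₂) →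
        precLt (selW W₂ ψ₂) (selW W₁ ψ₁)) := by
  have hss : 0 < (fmean ψ₁ + W₁) * (fmean ψ₂ + W₂) := mul_pos h₁norm h₂norm
  have hpre : preceq (selW W₂ ψ₂) (selW W₁ ψ₁) := by
    intro b₁ b₂ hb
    simp only [selW]
    rw [div_mul_div_comm, div_mul_div_comm, div_le_div_iff₀ hss hss]
    have := key_le ψ₁ ψ₂ W₁ W₂ h₁nn h₂nn h₁pos h₂pos h hW hb
    nlinarith [this, hss]
  refine ⟨hpre, fun hW' hnt => ⟨hpre, ?_⟩⟩
  obtain ⟨b₁, b₂, hb, h4, h3⟩ :=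
    exists_pair ψ₁ ψ₂ h₁nn h₂nn h hnt (support_ne ψ₁ h₁sum) (support_ne ψ₂ h₂sum)
  refine ⟨b₁, b₂, hb, ?_⟩
  simp only [selW]
  rw [div_mul_div_comm, div_mul_div_comm, div_lt_div_iff₀ hss hss]
  have := key_lt ψ₁ ψ₂ W₁ W₂ h₁nn h₂nn h₁pos h₂pos h hW' hb h4 h3
  nlinarith [this, hss]
end

section
/- Suppose ψ is an eigenvector (fixed point up to normalization) of the ℓ-locus operator Sel·Mut_{ac} on {1,...,N}^ℓ with eigenvalue λ. Then λ < Nℓτ^ℓ, where τ = b + 2√(ac). -/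
open Matrix

/-- One-locus mutation-with-truncation matrix: diagonal `b`, superdiagonal `a`,
subdiagonal `c`. -/
noncomputable def mut1 (a b c : ℝ) {N : ℕ} (i j : Fin N) : ℝ :=
  if i = j then b else if (j : ℕ) = (i : ℕ) + 1 then a
    else if (i : ℕ) = (j : ℕ) + 1 then c else 0

/-- The `ℓ`-locus operator `Sel·Mut_{ac}` on `{1,...,N}^ℓ` (index `x i : Fin N`
represents gene fitness `x i + 1`). -/
noncomputable def selMut (a b c : ℝ) (ℓ N : ℕ) :
    Matrix (Fin ℓ → Fin N) (Fin ℓ → Fin N) ℝ :=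
  Matrix.of fun x y => (∑ i, (((x i : ℕ) : ℝ) + 1)) * ∏ i, mut1 a b c (x i) (y i)

/-- Lemma: bound for the asex fixed point: any non-negative
eigenvector of `Sel·Mut_{ac}` has eigenvalue `λ < Nℓτ^ℓ`, where `τ = b + 2√(ac)`. -/
theorem asex_eigenvalue_bound (a b c : ℝ) (hc : 0 < c) (hca : c < a) (hab : a < b)
    (habc : a + b + c = 1) (τ : ℝ) (hτ : τ = b + 2 * Real.sqrt (a * c))
    (ℓ N : ℕ) (hℓ : 1 ≤ ℓ) (hN : 1 ≤ N)
    (ψ : (Fin ℓ → Fin N) → ℝ) (hψnn : ∀ x, 0 ≤ ψ x) (hψne : ψ ≠ 0)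
    (lam : ℝ) (heig : (selMut a b c ℓ N).mulVec ψ = lam • ψ) :
    lam < (N : ℝ) * (ℓ : ℝ) * τ ^ ℓ := by
  have ha : 0 < a := hc.trans hca
  have hb : 0 < b := ha.trans hab
  set A : ℝ := Real.sqrt (a * c) with hAdef
  set r : ℝ := Real.sqrt (a / c) with hrdef
  have hA0 : 0 < A := Real.sqrt_pos.mpr (by positivity)
  have hr0 : 0 < r := Real.sqrt_pos.mpr (by positivity)
  have hrA : r * A = a := by
    rw [hrdef, hAdef, ← Real.sqrt_mul (by positivity),
      show a / c * (a * c) = a ^ 2 by field_simp, Real.sqrt_sq ha.le]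
  have hcr : c * r = A := by
    rw [hrdef, hAdef]
    nth_rewrite 1 [← Real.sqrt_sq hc.le]
    rw [← Real.sqrt_mul (by positivity), show c ^ 2 * (a / c) = a * c by field_simp]
  -- nonnegativity of mut1
  have hmutnn : ∀ (t s : Fin N), 0 ≤ mut1 a b c t s := by
    intro t s
    unfold mut1
    split_ifs <;> linarith
  -- decomposition of mut1
  have hmut : ∀ (t s : Fin N), mut1 a b c t s =
      (if t = s then b else 0) + (if (s : ℕ) = (t : ℕ) + 1 then a else 0) +
        (if (t : ℕ) = (s : ℕ) + 1 then c else 0) := by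
    intro t s
    unfold mut1
    by_cases h1 : t = s
    · subst h1
      have h2 : ¬((t : ℕ) = (t : ℕ) + 1) := by omega
      simp [h2]
    · have h1' : (t : ℕ) ≠ (s : ℕ) := fun hh => h1 (Fin.ext hh)
      rw [if_neg h1, if_neg h1]
      by_cases h2 : (s : ℕ) = (t : ℕ) + 1
      · have h3 : ¬((t : ℕ) = (s : ℕ) + 1) := by omega
        rw [if_pos h2, if_pos h2, if_neg h3]; ring
      · rw [if_neg h2, if_neg h2]
        by_cases h3 : (t : ℕ) = (s : ℕ) + 1
        · rw [if_pos h3]; ring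
        · rw [if_neg h3]; ring
  -- column sums of the one-locus matrix (weighted by r^t)
  set colsum : Fin N → ℝ := fun s => ∑ t : Fin N, r ^ (t : ℕ) * mut1 a b c t s with hcolsumdef
  have hcol_eq : ∀ s : Fin N, colsum s =
      r ^ (s : ℕ) * b + (if 0 < (s : ℕ) then A * r ^ (s : ℕ) else 0) +
        (if (s : ℕ) + 1 < N then A * r ^ (s : ℕ) else 0) := by
    intro s
    have e1 : ∑ t : Fin N, r ^ (t : ℕ) * (if t = s then b else 0) = r ^ (s : ℕ) * b := by
      simp
    have e2 : ∑ t : Fin N, r ^ (t : ℕ) * (if (s : ℕ) = (t : ℕ) + 1 then a else 0)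
        = if 0 < (s : ℕ) then A * r ^ (s : ℕ) else 0 := by
      by_cases hs : 0 < (s : ℕ)
      · have hlt : (s : ℕ) - 1 < N := by omega
        rw [if_pos hs, Finset.sum_eq_single (⟨(s : ℕ) - 1, hlt⟩ : Fin N)]
        · rw [if_pos (by simp; omega)]
          have hse : (s : ℕ) = ((s : ℕ) - 1) + 1 := by omega
          calc r ^ (((⟨(s : ℕ) - 1, hlt⟩ : Fin N)) : ℕ) * a
              = r ^ ((s : ℕ) - 1) * (r * A) := by rw [hrA]
            _ = A * r ^ (((s : ℕ) - 1) + 1) := by rw [pow_succ]; ring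
            _ = A * r ^ (s : ℕ) := by rw [← hse]
        · intro t _ ht
          rw [if_neg, mul_zero]
          intro hcond
          exact ht (Fin.ext (by simp; omega))
        · intro h; exact absurd (Finset.mem_univ _) h
      · rw [if_neg hs]
        apply Finset.sum_eq_zero
        intro t _
        rw [if_neg (by omega), mul_zero]
    have e3 : ∑ t : Fin N, r ^ (t : ℕ) * (if (t : ℕ) = (s : ℕ) + 1 then c else 0)
        = if (s : ℕ) + 1 < N then A * r ^ (s : ℕ) else 0 := by
      by_cases hs : (s : ℕ) + 1 < N
      · rw [if_pos hs, Finset.sum_eq_single (⟨(s : ℕ) + 1, hs⟩ : Fin N)]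
        · rw [if_pos (by simp)]
          calc r ^ (((⟨(s : ℕ) + 1, hs⟩ : Fin N)) : ℕ) * c
              = r ^ ((s : ℕ) + 1) * c := by norm_num
            _ = r ^ (s : ℕ) * (c * r) := by rw [pow_succ]; ring
            _ = A * r ^ (s : ℕ) := by rw [hcr]; ring
        · intro t _ ht
          rw [if_neg, mul_zero]
          intro hcond
          exact ht (Fin.ext (by simpa using hcond))
        · intro h; exact absurd (Finset.mem_univ _) h
      · rw [if_neg hs]
        apply Finset.sum_eq_zero
        intro t _
        rw [if_neg (by omega), mul_zero]
    have hsplit : colsum s = ∑ t : Fin N, (r ^ (t : ℕ) * (if t = s then b else 0) +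
        r ^ (t : ℕ) * (if (s : ℕ) = (t : ℕ) + 1 then a else 0) +
        r ^ (t : ℕ) * (if (t : ℕ) = (s : ℕ) + 1 then c else 0)) :=
      Finset.sum_congr rfl (fun t _ => by rw [hmut t s]; ring)
    rw [hsplit, Finset.sum_add_distrib, Finset.sum_add_distrib, e1, e2, e3]
  have hτA : τ = b + 2 * A := by rw [hτ, hAdef]
  have hcol_le : ∀ s : Fin N, colsum s ≤ τ * r ^ (s : ℕ) := by
    intro s
    have hrp : 0 < r ^ (s : ℕ) := pow_pos hr0 _
    rw [hcol_eq s, hτA]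
    split_ifs <;> nlinarith
  have hcol_pos : ∀ s : Fin N, 0 < colsum s := by
    intro s
    have hrp : 0 < r ^ (s : ℕ) := pow_pos hr0 _
    rw [hcol_eq s]
    split_ifs <;> nlinarith
  have hcol_top : ∀ s : Fin N, (s : ℕ) + 1 = N → colsum s < τ * r ^ (s : ℕ) := by
    intro s hs
    have hrp : 0 < r ^ (s : ℕ) := pow_pos hr0 _
    rw [hcol_eq s, hτA, if_neg (show ¬((s : ℕ) + 1 < N) by omega)]
    split_ifs <;> nlinarith
  -- global quantities
  set F : (Fin ℓ → Fin N) → ℝ := fun x => ∑ i, (((x i : ℕ) : ℝ) + 1) with hFdef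
  set W : (Fin ℓ → Fin N) → ℝ := fun x => ∏ i, r ^ ((x i : ℕ)) with hWdef
  set K : (Fin ℓ → Fin N) → (Fin ℓ → Fin N) → ℝ :=
    fun x y => ∏ i, mut1 a b c (x i) (y i) with hKdef
  have hW0 : ∀ x, 0 < W x := fun x => Finset.prod_pos (fun i _ => pow_pos hr0 _)
  have hKnn : ∀ x y, 0 ≤ K x y := fun x y => Finset.prod_nonneg (fun i _ => hmutnn _ _)
  have hFle : ∀ x, F x ≤ (N : ℝ) * (ℓ : ℝ) := by
    intro x
    calc F x ≤ ∑ _i : Fin ℓ, (N : ℝ) := by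
          apply Finset.sum_le_sum
          intro i _
          have := (x i).isLt
          exact_mod_cast Nat.succ_le_of_lt this
      _ = (N : ℝ) * (ℓ : ℝ) := by simp [mul_comm]
  have hF0 : ∀ x, 0 ≤ F x := by
    intro x
    apply Finset.sum_nonneg
    intro i _
    positivity
  have hWK : ∀ x y, W x * K x y = ∏ i, (r ^ ((x i : ℕ)) * mut1 a b c (x i) (y i)) := by
    intro x y
    rw [hWdef, hKdef, ← Finset.prod_mul_distrib]
  have hsum_WK : ∀ y, ∑ x : Fin ℓ → Fin N, W x * K x y = ∏ i, colsum (y i) := by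
    intro y
    have := Finset.prod_univ_sum (fun _ : Fin ℓ => (Finset.univ : Finset (Fin N)))
      (fun i t => r ^ (t : ℕ) * mut1 a b c t (y i))
    rw [Fintype.piFinset_univ] at this
    calc ∑ x : Fin ℓ → Fin N, W x * K x y
        = ∑ x : Fin ℓ → Fin N, ∏ i, (r ^ ((x i : ℕ)) * mut1 a b c (x i) (y i)) :=
          Finset.sum_congr rfl (fun x _ => hWK x y)
      _ = ∏ i, colsum (y i) := this.symm
  have hτ0 : 0 < τ := by rw [hτA]; linarith
  have hNl : 0 < (N : ℝ) * (ℓ : ℝ) := by positivity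
  have hprod_le : ∀ y, ∏ i, colsum (y i) ≤ τ ^ ℓ * W y := by
    intro y
    have : τ ^ ℓ * W y = ∏ i : Fin ℓ, (τ * r ^ ((y i : ℕ))) := by
      rw [Finset.prod_mul_distrib, Finset.prod_const, Finset.card_univ, Fintype.card_fin, hWdef]
    rw [this]
    exact Finset.prod_le_prod (fun i _ => (hcol_pos _).le) (fun i _ => hcol_le _)
  -- the key strict column bound
  have hcol_lt : ∀ y, (∑ x : Fin ℓ → Fin N, F x * (W x * K x y))
      < ((N : ℝ) * (ℓ : ℝ) * τ ^ ℓ) * W y := by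
    intro y
    by_cases hcase : ∀ i, ((y i : ℕ)) + 1 = N
    · -- all coordinates at the top: strict per-coordinate bound
      have h1 : (∑ x : Fin ℓ → Fin N, F x * (W x * K x y))
          ≤ ((N : ℝ) * (ℓ : ℝ)) * ∑ x : Fin ℓ → Fin N, W x * K x y := by
        rw [Finset.mul_sum]
        apply Finset.sum_le_sum
        intro x _
        exact mul_le_mul_of_nonneg_right (hFle x) (mul_nonneg (hW0 x).le (hKnn x y))
      have h2 : ∏ i, colsum (y i) < τ ^ ℓ * W y := by
        have heq : τ ^ ℓ * W y = ∏ i : Fin ℓ, (τ * r ^ ((y i : ℕ))) := by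
          rw [Finset.prod_mul_distrib, Finset.prod_const, Finset.card_univ, Fintype.card_fin,
            hWdef]
        rw [heq]
        have : Nonempty (Fin ℓ) := ⟨⟨0, hℓ⟩⟩
        exact Finset.prod_lt_prod_of_nonempty (fun i _ => hcol_pos _)
          (fun i _ => hcol_top _ (hcase i)) Finset.univ_nonempty
      calc (∑ x : Fin ℓ → Fin N, F x * (W x * K x y))
          ≤ ((N : ℝ) * (ℓ : ℝ)) * ∑ x : Fin ℓ → Fin N, W x * K x y := h1
        _ = ((N : ℝ) * (ℓ : ℝ)) * ∏ i, colsum (y i) := by rw [hsum_WK]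
        _ < ((N : ℝ) * (ℓ : ℝ)) * (τ ^ ℓ * W y) := by
            exact mul_lt_mul_of_pos_left h2 hNl
        _ = ((N : ℝ) * (ℓ : ℝ) * τ ^ ℓ) * W y := by ring
    · -- some coordinate below the top: F y is strictly less than Nℓ
      push_neg at hcase
      obtain ⟨i0, hi0⟩ := hcase
      have hFy : F y < (N : ℝ) * (ℓ : ℝ) := by
        have : F y < ∑ _i : Fin ℓ, (N : ℝ) := by
          apply Finset.sum_lt_sum
          · intro i _
            have := (y i).isLt
            exact_mod_cast Nat.succ_le_of_lt this
          · refine ⟨i0, Finset.mem_univ _, ?_⟩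
            have h1 : (y i0 : ℕ) + 1 < N := by
              have := (y i0).isLt; omega
            exact_mod_cast h1
        simpa [mul_comm] using this
      have hKyy : 0 < K y y := by
        apply Finset.prod_pos
        intro i _
        have : mut1 a b c (y i) (y i) = b := by unfold mut1; simp
        rw [this]; exact hb
      have h1 : (∑ x : Fin ℓ → Fin N, F x * (W x * K x y))
          < ((N : ℝ) * (ℓ : ℝ)) * ∑ x : Fin ℓ → Fin N, W x * K x y := by
        rw [Finset.mul_sum]
        apply Finset.sum_lt_sum
        · intro x _
          exact mul_le_mul_of_nonneg_right (hFle x) (mul_nonneg (hW0 x).le (hKnn x y))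
        · refine ⟨y, Finset.mem_univ _, ?_⟩
          exact mul_lt_mul_of_pos_right hFy (mul_pos (hW0 y) hKyy)
      calc (∑ x : Fin ℓ → Fin N, F x * (W x * K x y))
          < ((N : ℝ) * (ℓ : ℝ)) * ∑ x : Fin ℓ → Fin N, W x * K x y := h1
        _ = ((N : ℝ) * (ℓ : ℝ)) * ∏ i, colsum (y i) := by rw [hsum_WK]
        _ ≤ ((N : ℝ) * (ℓ : ℝ)) * (τ ^ ℓ * W y) := by
            exact mul_le_mul_of_nonneg_left (hprod_le y) hNl.le
        _ = ((N : ℝ) * (ℓ : ℝ) * τ ^ ℓ) * W y := by ring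
  -- get a point where ψ is positive
  obtain ⟨y0, hy0⟩ : ∃ y0, ψ y0 ≠ 0 := Function.ne_iff.mp hψne
  have hy0pos : 0 < ψ y0 := lt_of_le_of_ne (hψnn y0) (Ne.symm hy0)
  set S : ℝ := ∑ y, W y * ψ y with hSdef
  have hS : 0 < S := by
    apply Finset.sum_pos'
    · intro y _
      exact mul_nonneg (hW0 y).le (hψnn y)
    · exact ⟨y0, Finset.mem_univ _, mul_pos (hW0 y0) hy0pos⟩
  -- eigenvalue equation summed against W
  have heig' : ∀ x, ∑ y, F x * K x y * ψ y = lam * ψ x := by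
    intro x
    have := congrFun heig x
    simpa [Matrix.mulVec, dotProduct, selMut, hFdef, hKdef] using this
  have hlamS : lam * S = ∑ y, (∑ x : Fin ℓ → Fin N, F x * (W x * K x y)) * ψ y := by
    calc lam * S = ∑ x, W x * (lam * ψ x) := by
          rw [hSdef, Finset.mul_sum]
          apply Finset.sum_congr rfl
          intro x _; ring
      _ = ∑ x, W x * ∑ y, F x * K x y * ψ y := by
          apply Finset.sum_congr rfl
          intro x _
          rw [heig' x]
      _ = ∑ x, ∑ y, F x * (W x * K x y) * ψ y := by
          apply Finset.sum_congr rfl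
          intro x _
          rw [Finset.mul_sum]
          apply Finset.sum_congr rfl
          intro y _; ring
      _ = ∑ y, ∑ x, F x * (W x * K x y) * ψ y := Finset.sum_comm
      _ = ∑ y, (∑ x : Fin ℓ → Fin N, F x * (W x * K x y)) * ψ y := by
          apply Finset.sum_congr rfl
          intro y _
          rw [Finset.sum_mul]
  have hfin : lam * S < ((N : ℝ) * (ℓ : ℝ) * τ ^ ℓ) * S := by
    rw [hlamS]
    calc ∑ y, (∑ x : Fin ℓ → Fin N, F x * (W x * K x y)) * ψ y
        < ∑ y, (((N : ℝ) * (ℓ : ℝ) * τ ^ ℓ) * W y) * ψ y := by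
          apply Finset.sum_lt_sum
          · intro y _
            exact mul_le_mul_of_nonneg_right (hcol_lt y).le (hψnn y)
          · exact ⟨y0, Finset.mem_univ _, mul_lt_mul_of_pos_right (hcol_lt y0) hy0pos⟩
      _ = ((N : ℝ) * (ℓ : ℝ) * τ ^ ℓ) * S := by
          rw [hSdef, Finset.mul_sum]
          apply Finset.sum_congr rfl
          intro y _; ring
  exact lt_of_mul_lt_mul_right hfin hS.le
end

section
/- Let ψ₂ ≼ ψ₁ be probability distributions on ℤ (likelihood-ratio order). Then there exist disjoint (possibly empty) subsets Π₁, Π₂, Π₃ of ℤ such that supp(ψ₂) = Π₁ ∪ Π₂, supp(ψ₁) = Π₂ ∪ Π₃, and every element of Π₁ is less than every element of Π₂, which in turn is less than every element of Π₃. -/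
open scoped BigOperators

/-- if `ψ₂ ≼ ψ₁` then the supports decompose into disjoint pieces
`P₁ < P₂ < P₃` with `supp ψ₂ = P₁ ∪ P₂` and `supp ψ₁ = P₂ ∪ P₃`. -/
theorem preceq_support_decomposition (ψ₁ ψ₂ : ℤ → ℝ)
    (h₁nn : ∀ x, 0 ≤ ψ₁ x) (h₂nn : ∀ x, 0 ≤ ψ₂ x)
    (h₁fin : (Function.support ψ₁).Finite) (h₂fin : (Function.support ψ₂).Finite)
    (h₁sum : ∑ᶠ x : ℤ, ψ₁ x = 1) (h₂sum : ∑ᶠ x : ℤ, ψ₂ x = 1)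
    (h : preceq ψ₂ ψ₁) :
    ∃ P₁ P₂ P₃ : Set ℤ,
      Disjoint P₁ P₂ ∧ Disjoint P₂ P₃ ∧ Disjoint P₁ P₃ ∧
      Function.support ψ₂ = P₁ ∪ P₂ ∧ Function.support ψ₁ = P₂ ∪ P₃ ∧
      (∀ x ∈ P₁, ∀ y ∈ P₂, x < y) ∧ (∀ y ∈ P₂, ∀ z ∈ P₃, y < z) ∧
      (∀ x ∈ P₁, ∀ z ∈ P₃, x < z) := by
  refine ⟨Function.support ψ₂ \ Function.support ψ₁,
    Function.support ψ₂ ∩ Function.support ψ₁,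
    Function.support ψ₁ \ Function.support ψ₂, ?_, ?_, ?_, ?_, ?_, ?_, ?_, ?_⟩
  · exact Set.disjoint_left.2 fun a ha hb => ha.2 hb.2
  · exact Set.disjoint_left.2 fun a ha hb => hb.2 ha.1
  · exact Set.disjoint_left.2 fun a ha hb => ha.2 hb.1
  · simp [Set.diff_union_inter]
  · rw [Set.union_comm, Set.inter_comm]; simp [Set.diff_union_inter]
  · rintro x ⟨hx2, hx1⟩ y ⟨hy2, hy1⟩
    rcases lt_trichotomy x y with h' | h' | h'
    · exact h'
    · exact absurd (h' ▸ hy1) hx1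
    · have := h y x h'
      rw [Function.notMem_support.1 hx1, zero_mul] at this
      exact absurd this (not_le_of_gt (mul_pos ((h₁nn y).lt_of_ne (Ne.symm hy1))
        ((h₂nn x).lt_of_ne (Ne.symm hx2))))
  · rintro y ⟨hy2, hy1⟩ z ⟨hz1, hz2⟩
    rcases lt_trichotomy y z with h' | h' | h'
    · exact h'
    · exact absurd (h' ▸ hy2) hz2
    · have := h z y h'
      rw [Function.notMem_support.1 hz2, mul_zero] at this
      exact absurd this (not_le_of_gt (mul_pos ((h₁nn z).lt_of_ne (Ne.symm hz1))
        ((h₂nn y).lt_of_ne (Ne.symm hy2))))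
  · rintro x ⟨hx2, hx1⟩ z ⟨hz1, hz2⟩
    rcases lt_trichotomy x z with h' | h' | h'
    · exact h'
    · exact absurd (h' ▸ hz1) hx1
    · have := h z x h'
      rw [Function.notMem_support.1 hx1, zero_mul] at this
      exact absurd this (not_le_of_gt (mul_pos ((h₁nn z).lt_of_ne (Ne.symm hz1))
        ((h₂nn x).lt_of_ne (Ne.symm hx2))))
end

section
/- Let X be an integer-valued random variable with distribution φ, mean M > 0, and finite cumulants κ₂ = V, κ₃, κ₄. Define φ*(x) = (x/M)φ(x). Then the third cumulant of φ* satisfies κ₃* − κ₃ = (V/M)·((κ₄/V) − 3(κ₃/M) + 2(V/M)²). -/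
open scoped BigOperators

/-- Third cumulant (= third central moment). -/
noncomputable def fcm3 (φ : ℤ → ℝ) : ℝ := ∑ᶠ x : ℤ, ((x : ℝ) - fmean φ) ^ 3 * φ x

/-- Fourth central moment. -/
noncomputable def fcm4 (φ : ℤ → ℝ) : ℝ := ∑ᶠ x : ℤ, ((x : ℝ) - fmean φ) ^ 4 * φ x

/-- Fourth cumulant: `κ₄ = μ₄ − 3V²`. -/
noncomputable def fcum4 (φ : ℤ → ℝ) : ℝ := fcm4 φ - 3 * (fvar φ) ^ 2

/-- the effect of selection `φ*(x) = (x/M)φ(x)` on the third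
cumulant: `κ₃* − κ₃ = (V/M)((κ₄/V) − 3(κ₃/M) + 2(V/M)²)`. -/
theorem selection_third_cumulant (φ : ℤ → ℝ) (hnn : ∀ x, 0 ≤ φ x)
    (hfin : (Function.support φ).Finite) (hsum : ∑ᶠ x : ℤ, φ x = 1)
    (M V κ₃ κ₄ : ℝ) (hM : M = fmean φ) (hMpos : 0 < M) (hV : V = fvar φ)
    (hκ₃ : κ₃ = fcm3 φ) (hκ₄ : κ₄ = fcum4 φ) :
    fcm3 (fun x => ((x : ℝ) / M) * φ x) - κ₃
      = (V / M) * ((κ₄ / V) - 3 * (κ₃ / M) + 2 * (V / M) ^ 2) := by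
  have hM0 : M ≠ 0 := ne_of_gt hMpos
  set s := hfin.toFinset with hs
  have hconv : ∀ f : ℤ → ℝ, (∀ x, φ x = 0 → f x = 0) →
      ∑ᶠ x : ℤ, f x = ∑ x ∈ s, f x := by
    intro f hf
    apply finsum_eq_finset_sum_of_support_subset
    intro x hx
    simp only [Function.mem_support] at hx
    have : φ x ≠ 0 := fun h => hx (hf x h)
    simpa [hs, Set.Finite.mem_toFinset] using this
  have hP0 : ∑ x ∈ s, φ x = 1 := by
    rw [← hconv φ (fun x h => h)]; exact hsum
  have hP1 : ∑ x ∈ s, (x : ℝ) * φ x = M := by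
    rw [← hconv _ (fun x h => by simp [h])]; exact hM.symm
  set P2 : ℝ := ∑ x ∈ s, (x : ℝ) ^ 2 * φ x with hP2
  set P3 : ℝ := ∑ x ∈ s, (x : ℝ) ^ 3 * φ x with hP3
  set P4 : ℝ := ∑ x ∈ s, (x : ℝ) ^ 4 * φ x with hP4
  have hsplit : ∀ a4 a3 a2 a1 a0 : ℝ,
      ∑ x ∈ s, (a4 * (x:ℝ)^4 + a3 * (x:ℝ)^3 + a2 * (x:ℝ)^2 + a1 * (x:ℝ) + a0) * φ x
        = a4 * P4 + a3 * P3 + a2 * P2 + a1 * M + a0 := by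
    intro a4 a3 a2 a1 a0
    have : ∀ x ∈ s, (a4 * (x:ℝ)^4 + a3 * (x:ℝ)^3 + a2 * (x:ℝ)^2 + a1 * (x:ℝ) + a0) * φ x
        = a4 * ((x:ℝ)^4 * φ x) + a3 * ((x:ℝ)^3 * φ x) + a2 * ((x:ℝ)^2 * φ x)
          + a1 * ((x:ℝ) * φ x) + a0 * φ x := fun x _ => by ring
    rw [Finset.sum_congr rfl this]
    simp only [Finset.sum_add_distrib, ← Finset.mul_sum]
    rw [hP1, hP0, mul_one]
  -- central moments of φ
  have hVval : V = P2 - M ^ 2 := by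
    rw [hV]
    unfold fvar
    rw [← hM, hconv _ (fun x h => by simp [h])]
    have : ∀ x ∈ s, ((x:ℝ) - M) ^ 2 * φ x
        = ((0:ℝ) * (x:ℝ)^4 + 0 * (x:ℝ)^3 + 1 * (x:ℝ)^2 + (-2*M) * (x:ℝ) + M^2) * φ x :=
      fun x _ => by ring
    rw [Finset.sum_congr rfl this, hsplit]; ring
  have hκ₃val : κ₃ = P3 - 3 * M * P2 + 2 * M ^ 3 := by
    rw [hκ₃]
    unfold fcm3
    rw [← hM, hconv _ (fun x h => by simp [h])]
    have : ∀ x ∈ s, ((x:ℝ) - M) ^ 3 * φ x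
        = ((0:ℝ) * (x:ℝ)^4 + 1 * (x:ℝ)^3 + (-3*M) * (x:ℝ)^2 + (3*M^2) * (x:ℝ) + (-M^3)) * φ x :=
      fun x _ => by ring
    rw [Finset.sum_congr rfl this, hsplit]; ring
  have hκ₄val : κ₄ = P4 - 4 * M * P3 + 6 * M ^ 2 * P2 - 3 * M ^ 4 - 3 * V ^ 2 := by
    rw [hκ₄]
    unfold fcum4
    rw [← hV]
    unfold fcm4
    rw [← hM, hconv _ (fun x h => by simp [h])]
    have : ∀ x ∈ s, ((x:ℝ) - M) ^ 4 * φ x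
        = ((1:ℝ) * (x:ℝ)^4 + (-4*M) * (x:ℝ)^3 + (6*M^2) * (x:ℝ)^2 + (-4*M^3) * (x:ℝ) + M^4) * φ x :=
      fun x _ => by ring
    rw [Finset.sum_congr rfl this, hsplit]; ring
  -- mean of φ*
  have hA : fmean (fun x => ((x : ℝ) / M) * φ x) = P2 / M := by
    unfold fmean
    rw [hconv _ (fun x h => by simp [h])]
    have : ∀ x ∈ s, (x:ℝ) * (((x:ℝ) / M) * φ x)
        = ((0:ℝ) * (x:ℝ)^4 + 0 * (x:ℝ)^3 + (1/M) * (x:ℝ)^2 + 0 * (x:ℝ) + 0) * φ x :=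
      fun x _ => by ring
    rw [Finset.sum_congr rfl this, hsplit]; ring
  -- third central moment of φ*
  set A : ℝ := P2 / M with hAdef
  have hstar : fcm3 (fun x => ((x : ℝ) / M) * φ x)
      = (1/M) * P4 + (-3*A/M) * P3 + (3*A^2/M) * P2 + (-A^3/M) * M := by
    unfold fcm3
    rw [hA, hconv _ (fun x h => by simp [h])]
    have : ∀ x ∈ s, ((x:ℝ) - A) ^ 3 * (((x:ℝ) / M) * φ x)
        = ((1/M) * (x:ℝ)^4 + (-3*A/M) * (x:ℝ)^3 + (3*A^2/M) * (x:ℝ)^2 + (-A^3/M) * (x:ℝ) + 0) * φ x :=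
      fun x hx => by field_simp; ring
    rw [Finset.sum_congr rfl this, hsplit]; ring
  rw [hstar]
  by_cases hV0 : V = 0
  · -- degenerate case
    have hz : ∀ x ∈ s, ((x:ℝ) - M) * φ x = 0 := by
      intro x hx
      have hsum0 : ∑ x ∈ s, ((x:ℝ) - M) ^ 2 * φ x = 0 := by
        have : ∀ x ∈ s, ((x:ℝ) - M) ^ 2 * φ x
            = ((0:ℝ) * (x:ℝ)^4 + 0 * (x:ℝ)^3 + 1 * (x:ℝ)^2 + (-2*M) * (x:ℝ) + M^2) * φ x :=
          fun x _ => by ring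
        rw [Finset.sum_congr rfl this, hsplit]
        have := hVval; rw [hV0] at this; linarith [this]
      have hnn' : ∀ x ∈ s, 0 ≤ ((x:ℝ) - M) ^ 2 * φ x :=
        fun x _ => mul_nonneg (sq_nonneg _) (hnn x)
      have := (Finset.sum_eq_zero_iff_of_nonneg hnn').mp hsum0 x hx
      rcases mul_eq_zero.mp this with h | h
      · rw [pow_eq_zero_iff (by norm_num)] at h; rw [h]; ring
      · rw [h]; ring
    have h2 : P2 = M ^ 2 := by
      have : ∀ x ∈ s, (x:ℝ) ^ 2 * φ x = M * ((x:ℝ) * φ x) := by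
        intro x hx; linear_combination (x:ℝ) * hz x hx
      rw [hP2, Finset.sum_congr rfl this, ← Finset.mul_sum, hP1]; ring
    have h3 : P3 = M ^ 3 := by
      have : ∀ x ∈ s, (x:ℝ) ^ 3 * φ x = M * ((x:ℝ) ^ 2 * φ x) := by
        intro x hx; linear_combination (x:ℝ)^2 * hz x hx
      rw [hP3, Finset.sum_congr rfl this, ← Finset.mul_sum, ← hP2, h2]; ring
    have h4 : P4 = M ^ 4 := by
      have : ∀ x ∈ s, (x:ℝ) ^ 4 * φ x = M * ((x:ℝ) ^ 3 * φ x) := by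
        intro x hx; linear_combination (x:ℝ)^3 * hz x hx
      rw [hP4, Finset.sum_congr rfl this, ← Finset.mul_sum, ← hP3, h3]; ring
    have hk3 : κ₃ = 0 := by rw [hκ₃val, h2, h3]; ring
    rw [hk3, hV0, hAdef, h2, h3, h4]
    field_simp
    ring
  · -- nondegenerate case
    rw [hκ₃val, hκ₄val, hAdef, hVval] at *
    have hV0' : P2 - M ^ 2 ≠ 0 := by rw [hVval] at hV0; exact hV0
    field_simp
    ring
end

section
/- Fix 0 < a' = c' < b' with 2a' + b' = 1. For each N, let ψ_N be the Perron eigenvector (normalized probability distribution) of the 1-locus operator Sel·Mut_{a'a'} on {1,...,N}, with eigenvalue λ_N. Then lim_{N→∞} λ_N / N = 1. -/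
open Matrix Filter

/-- The 1-locus operator `Sel·Mut_{a'a'}` on `{1,...,N}` (index `i : Fin N`
represents fitness `i + 1`): tridiagonal mutation with equal up/down rates `a'`,
diagonal `b'`, followed by fitness-proportional selection. -/
noncomputable def selMut1 (a' b' : ℝ) (N : ℕ) : Matrix (Fin N) (Fin N) ℝ :=
  Matrix.of fun i j => (((i : ℕ) : ℝ) + 1) *
    (if i = j then b' else if (j : ℕ) = (i : ℕ) + 1 then a'
      else if (i : ℕ) = (j : ℕ) + 1 then a' else 0)


lemma mulVec_selMut1 (a' b' : ℝ) {N : ℕ} (v : Fin N → ℝ) (i : Fin N) :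
    (selMut1 a' b' N).mulVec v i = (((i:ℕ):ℝ)+1) * (b' * v i
      + a' * (if h : (i:ℕ)+1 < N then v ⟨(i:ℕ)+1, h⟩ else 0)
      + a' * (if h : 0 < (i:ℕ) then v ⟨(i:ℕ)-1, lt_of_le_of_lt (Nat.sub_le _ _) i.isLt⟩ else 0)) := by
  have hexp : ∀ j : Fin N, selMut1 a' b' N i j * v j
      = (((i:ℕ):ℝ)+1) * ((if j = i then b' * v j else 0)
        + (if (j:ℕ) = (i:ℕ)+1 then a' * v j else 0)
        + (if (i:ℕ) = (j:ℕ)+1 then a' * v j else 0)) := by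
    intro j
    simp only [selMut1, Matrix.of_apply, Fin.ext_iff]
    split_ifs <;> (first | (exfalso; omega) | ring)
  have h1 : ∑ j : Fin N, (if j = i then b' * v j else 0) = b' * v i := by
    rw [Finset.sum_ite_eq' Finset.univ i (fun j => b' * v j)]
    simp
  have h2 : ∑ j : Fin N, (if (j:ℕ) = (i:ℕ)+1 then a' * v j else 0)
      = (a' * (if h : (i:ℕ)+1 < N then v ⟨(i:ℕ)+1, h⟩ else 0)) := by
    by_cases hup : (i:ℕ)+1 < N
    · rw [dif_pos hup]
      have hc : ∀ j : Fin N, ((j:ℕ) = (i:ℕ)+1) ↔ (j = ⟨(i:ℕ)+1, hup⟩) := by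
        intro j; rw [Fin.ext_iff]
      simp only [hc]
      rw [Finset.sum_ite_eq' Finset.univ _ (fun j => a' * v j)]
      simp
    · rw [dif_neg hup, mul_zero]
      exact Finset.sum_eq_zero fun j _ => if_neg (by have := j.isLt; omega)
  have h3 : ∑ j : Fin N, (if (i:ℕ) = (j:ℕ)+1 then a' * v j else 0)
      = (a' * (if h : 0 < (i:ℕ) then v ⟨(i:ℕ)-1, lt_of_le_of_lt (Nat.sub_le _ _) i.isLt⟩ else 0)) := by
    by_cases hd : 0 < (i:ℕ)
    · rw [dif_pos hd]
      have hc : ∀ j : Fin N, ((i:ℕ) = (j:ℕ)+1) ↔ (j = ⟨(i:ℕ)-1, lt_of_le_of_lt (Nat.sub_le _ _) i.isLt⟩) := by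
        intro j; rw [Fin.ext_iff]; simp only [Fin.val_mk]; omega
      simp only [hc]
      rw [Finset.sum_ite_eq' Finset.univ _ (fun j => a' * v j)]
      simp
    · rw [dif_neg hd, mul_zero]
      exact Finset.sum_eq_zero fun j _ => if_neg (by omega)
  calc (selMut1 a' b' N).mulVec v i = ∑ j : Fin N, selMut1 a' b' N i j * v j := rfl
    _ = ∑ j : Fin N, (((i:ℕ):ℝ)+1) * ((if j = i then b' * v j else 0)
        + (if (j:ℕ) = (i:ℕ)+1 then a' * v j else 0)
        + (if (i:ℕ) = (j:ℕ)+1 then a' * v j else 0)) := by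
        exact Finset.sum_congr rfl fun j _ => hexp j
    _ = (((i:ℕ):ℝ)+1) * (∑ j : Fin N, ((if j = i then b' * v j else 0)
        + (if (j:ℕ) = (i:ℕ)+1 then a' * v j else 0)
        + (if (i:ℕ) = (j:ℕ)+1 then a' * v j else 0))) := by rw [Finset.mul_sum]
    _ = _ := by rw [Finset.sum_add_distrib, Finset.sum_add_distrib, h1, h2, h3]

lemma eigen_interior (a' b' : ℝ) {N : ℕ} (lam : ℝ) (ψ : Fin N → ℝ)
    (heig : (selMut1 a' b' N).mulVec ψ = lam • ψ) {j : ℕ} (h1 : 1 ≤ j) (h2 : j + 2 ≤ N) :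
    lam * ψ ⟨N - 1 - j, by omega⟩
      = ((N:ℝ) - j) * (b' * ψ ⟨N - 1 - j, by omega⟩ + a' * ψ ⟨N - j, by omega⟩
          + a' * ψ ⟨N - 2 - j, by omega⟩) := by
  have h := congrFun heig ⟨N - 1 - j, by omega⟩
  rw [mulVec_selMut1] at h
  simp only [Pi.smul_apply, smul_eq_mul, Fin.val_mk] at h
  rw [dif_pos (show N - 1 - j + 1 < N by omega), dif_pos (show 0 < N - 1 - j by omega)] at h
  have e1 : (⟨N - 1 - j + 1, by omega⟩ : Fin N) = ⟨N - j, by omega⟩ := by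
    apply Fin.ext; simp; omega
  have e2 : (⟨N - 1 - j - 1, by omega⟩ : Fin N) = ⟨N - 2 - j, by omega⟩ := by
    apply Fin.ext; simp; omega
  rw [e1, e2] at h
  have hc : ((N - 1 - j : ℕ) : ℝ) + 1 = (N:ℝ) - j := by
    rw [show N - 1 - j = N - (j+1) by omega, Nat.cast_sub (by omega)]
    push_cast; ring
  rw [hc] at h
  linarith [h]

lemma step_ineq (a' q Δ α β γ : ℝ) (ha : 0 < a') (hq0 : 0 < q) (hq2 : q < 2*a')
    (hΔ : Δ = (4*a'^2 - q^2)/(8*a'^2)) (hα : 0 < α) (hβ : 0 < β) (hγ : 0 < γ)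
    (hkey : a'*γ ≤ q*β - a'*α) : α/β + Δ ≤ β/γ := by
  have hΔ0 : 0 < Δ := by
    rw [hΔ]; apply div_pos; nlinarith; positivity
  have hΔq : 8*a'^2*Δ = 4*a'^2 - q^2 := by
    rw [hΔ]; field_simp
  have hAB : (0:ℝ) ≤ α + Δ*β := by positivity
  have key1 : 4*a'*(a'*α^2 - q*α*β + a'*β^2) - 8*a'^2*Δ*β^2 = (2*a'*α - q*β)^2 := by
    linear_combination (-(β^2)) * hΔq
  have e1 : 8*a'^2*Δ*β^2 ≤ 4*a'*(a'*α^2 - q*α*β + a'*β^2) := by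
    nlinarith [sq_nonneg (2*a'*α - q*β), key1]
  have t1 : (0:ℝ) ≤ 4*a'*Δ*β := by positivity
  have t2 : q*β - a'*α - 2*a'*β ≤ 0 := by nlinarith
  have e2 : 4*a'*(Δ*(q*β^2 - a'*α*β)) ≤ 8*a'^2*Δ*β^2 := by
    nlinarith [mul_nonpos_of_nonneg_of_nonpos t1 t2]
  have s1 : 4*a'*(a'*γ*(α+Δ*β)) ≤ 4*a'*((q*β - a'*α)*(α+Δ*β)) := by
    have := mul_le_mul_of_nonneg_right hkey hAB
    nlinarith
  have s2 : 4*a'*((q*β - a'*α)*(α+Δ*β)) ≤ 4*a'*(a'*β^2) := by nlinarith [e1, e2]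
  have hmain : γ*(α+Δ*β) ≤ β^2 := by
    have h4 : (0:ℝ) < 4*a'^2 := by positivity
    have : (4*a'^2) * (γ*(α+Δ*β)) ≤ (4*a'^2) * (β^2) := by nlinarith [s1, s2]
    exact le_of_mul_le_mul_left this h4
  rw [div_add' _ _ _ (ne_of_gt hβ), div_le_div_iff₀ hβ hγ]
  nlinarith [hmain]

lemma upper_bound (a' b' : ℝ) (ha : 0 < a') (hb : 0 < b') (hsum : 2 * a' + b' = 1)
    {N : ℕ} (hN : 1 ≤ N) (lam : ℝ) (ψ : Fin N → ℝ) (hpos : ∀ x, 0 < ψ x)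
    (heig : (selMut1 a' b' N).mulVec ψ = lam • ψ) : lam ≤ N ∧ 0 < lam := by
  obtain ⟨i, -, hi⟩ := Finset.exists_max_image Finset.univ ψ ⟨⟨0, hN⟩, Finset.mem_univ _⟩
  have hEq := congrFun heig i
  rw [mulVec_selMut1] at hEq
  simp only [Pi.smul_apply, smul_eq_mul] at hEq
  set X := (if h : (i:ℕ)+1 < N then ψ ⟨(i:ℕ)+1, h⟩ else 0) with hX
  set Y := (if h : 0 < (i:ℕ) then ψ ⟨(i:ℕ)-1, lt_of_le_of_lt (Nat.sub_le _ _) i.isLt⟩ else 0) with hY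
  have hX1 : X ≤ ψ i ∧ 0 ≤ X := by
    rw [hX]; split_ifs with h
    · exact ⟨hi _ (Finset.mem_univ _), (hpos _).le⟩
    · exact ⟨(hpos i).le, le_refl 0⟩
  have hY1 : Y ≤ ψ i ∧ 0 ≤ Y := by
    rw [hY]; split_ifs with h
    · exact ⟨hi _ (Finset.mem_univ _), (hpos _).le⟩
    · exact ⟨(hpos i).le, le_refl 0⟩
  have hiN : ((i:ℕ):ℝ) + 1 ≤ N := by
    have := i.isLt; exact_mod_cast Nat.succ_le_of_lt this
  have hi0 : (0:ℝ) ≤ ((i:ℕ):ℝ) + 1 := by positivity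
  have hψi := hpos i
  constructor
  · have h1 : lam * ψ i ≤ (N:ℝ) * ψ i := by
      nlinarith [hEq, mul_nonneg hi0 hψi.le,
        mul_nonneg (mul_nonneg hi0 ha.le) (sub_nonneg.mpr hX1.1),
        mul_nonneg (mul_nonneg hi0 ha.le) (sub_nonneg.mpr hY1.1),
        mul_nonneg (sub_nonneg.mpr hiN) hψi.le]
    exact le_of_mul_le_mul_right (by linarith) hψi
  · have h2 : 0 < lam * ψ i := by
      nlinarith [hEq, mul_pos hb hψi, (by positivity : (0:ℝ) ≤ ((i:ℕ):ℝ)),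
        mul_nonneg hi0 (mul_nonneg ha.le hX1.2), mul_nonneg hi0 (mul_nonneg ha.le hY1.2)]
    have h3 := div_pos h2 hψi
    rwa [mul_div_assoc, div_self (ne_of_gt hψi), mul_one] at h3


set_option maxHeartbeats 1000000 in
/-- for the symmetric 1-locus process, the Perron eigenvalue `λ_N`
(the eigenvalue of a strictly positive eigenvector) satisfies `λ_N / N → 1`. -/
theorem symmetric_perron_eigenvalue_limit (a' b' : ℝ) (ha : 0 < a')
    (hab : a' < b') (hsum : 2 * a' + b' = 1)
    (lam : ℕ → ℝ) (ψ : (N : ℕ) → Fin N → ℝ)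
    (h : ∀ N, 1 ≤ N → (∀ x, 0 < ψ N x) ∧
      (selMut1 a' b' N).mulVec (ψ N) = lam N • ψ N) :
    Tendsto (fun N => lam N / (N : ℝ)) atTop (nhds 1) := by
  have hb : 0 < b' := lt_trans ha hab
  rw [Metric.tendsto_atTop]
  intro ε hε
  set m := min ε (2*a') with hm
  have hm0 : 0 < m := lt_min hε (by linarith)
  have hmε : m ≤ ε := min_le_left _ _
  have hma : m ≤ 2*a' := min_le_right _ _
  set c₁ : ℝ := 1 - m/2 with hc₁
  have hc₁b : b' < c₁ := by
    have : m/2 < 2*a' := by linarith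
    simp only [hc₁]; linarith
  have hc₁1 : c₁ < 1 := by simp only [hc₁]; linarith
  have hc₁0 : 0 < c₁ := by
    have h2a : 2*a' < 1 := by linarith
    simp only [hc₁]; linarith
  have hq0 : 0 < c₁ - b' := by linarith
  have hq2 : c₁ - b' < 2*a' := by simp only [hc₁]; linarith
  set Δ : ℝ := (4*a'^2 - (c₁ - b')^2)/(8*a'^2) with hΔ
  have hΔ0 : 0 < Δ := by
    rw [hΔ]; apply div_pos; nlinarith; positivity
  set K := ⌈(2:ℝ)/Δ⌉₊ with hK
  have hKΔ : 2 ≤ (K:ℝ) * Δ := by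
    have h1 := Nat.le_ceil ((2:ℝ)/Δ)
    have h2 := mul_le_mul_of_nonneg_right h1 hΔ0.le
    rw [div_mul_cancel₀] at h2
    · exact_mod_cast h2
    · exact ne_of_gt hΔ0
  set N₀ := max (K+3) (⌈2*((K:ℝ)+1)/ε⌉₊ + 1) with hN₀
  refine ⟨N₀, fun N hN => ?_⟩
  have hN3 : K + 3 ≤ N := le_trans (le_max_left _ _) hN
  have hN1 : 1 ≤ N := by omega
  obtain ⟨hpos, heig⟩ := h N hN1
  obtain ⟨hle, hlam0⟩ := upper_bound a' b' ha hb hsum hN1 (lam N) (ψ N) hpos heig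
  have hNpos : (0:ℝ) < N := by exact_mod_cast Nat.lt_of_lt_of_le Nat.zero_lt_one hN1
  rw [Real.dist_eq, abs_lt]
  have hub : lam N / N ≤ 1 := by rw [div_le_one hNpos]; exact hle
  refine ⟨?_, by linarith⟩
  -- lower bound: show -ε < lam N / N - 1
  by_contra hcon
  push_neg at hcon
  have hlamle : lam N ≤ (1-ε) * N := by
    have h1 : lam N / N ≤ 1 - ε := by linarith
    have := (div_le_iff₀ hNpos).mp h1
    linarith
  have hNε : 2*((K:ℝ)+1)/ε ≤ N := by
    have h2 : (⌈2*((K:ℝ)+1)/ε⌉₊ + 1 : ℕ) ≤ N :=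
      le_trans (le_max_right (K+3) _) hN
    calc 2*((K:ℝ)+1)/ε ≤ (⌈2*((K:ℝ)+1)/ε⌉₊:ℝ) := Nat.le_ceil _
      _ ≤ N := by exact_mod_cast Nat.le_of_succ_le h2
  have hwin : ∀ jr : ℝ, 0 ≤ jr → jr ≤ (K:ℝ)+1 → lam N ≤ c₁ * ((N:ℝ) - jr) := by
    intro jr h0 h1
    have hNε' : 2*((K:ℝ)+1) ≤ (N:ℝ)*ε := by
      rw [div_le_iff₀ hε] at hNε; linarith
    have hNm : (N:ℝ)*m ≤ (N:ℝ)*ε := mul_le_mul_of_nonneg_left hmε hNpos.le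
    have key : (1-ε)*(N:ℝ) ≤ c₁*((N:ℝ) - ((K:ℝ)+1)) := by
      simp only [hc₁]
      nlinarith [hNε', hNm]
    calc lam N ≤ (1-ε)*N := hlamle
      _ ≤ c₁*((N:ℝ) - ((K:ℝ)+1)) := key
      _ ≤ c₁*((N:ℝ) - jr) := by
          apply mul_le_mul_of_nonneg_left (by linarith) hc₁0.le
  set u : ℕ → ℝ := fun j => ψ N ⟨N - 1 - j, by omega⟩ with hu
  have hupos : ∀ j, 0 < u j := fun j => hpos _
  set η : ℕ → ℝ := fun j => u (j-1) / u j with hη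
  have hηpos : ∀ j, 0 < η j := fun j => div_pos (hupos _) (hupos _)
  have heq : ∀ j, 1 ≤ j → j ≤ K+1 →
      lam N * u j = ((N:ℝ) - j) * (b' * u j + a' * u (j-1) + a' * u (j+1)) := by
    intro j hj1 hj2
    have h2 : j + 2 ≤ N := by omega
    have hthis := eigen_interior a' b' (lam N) (ψ N) heig hj1 h2
    have e1 : u (j-1) = ψ N ⟨N - j, by omega⟩ := by
      simp only [hu]; congr 1; apply Fin.ext; simp; omega
    have e2 : u (j+1) = ψ N ⟨N - 2 - j, by omega⟩ := by
      simp only [hu]; congr 1; apply Fin.ext; simp; omega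
    rw [e1, e2]
    exact hthis
  -- from equation: cancellation of (N - j)
  have hcan : ∀ j, 1 ≤ j → j ≤ K+1 →
      b' * u j + a' * u (j-1) + a' * u (j+1) ≤ c₁ * u j := by
    intro j hj1 hj2
    have he := heq j hj1 hj2
    have hjK : (j:ℝ) ≤ (K:ℝ)+1 := by exact_mod_cast hj2
    have hw := hwin (j:ℝ) (by positivity) hjK
    have hNj : (0:ℝ) < (N:ℝ) - j := by
      have : (j:ℝ) < (N:ℝ) := by exact_mod_cast (by omega : j < N)
      linarith
    have hwu : lam N * u j ≤ c₁ * ((N:ℝ)-j) * u j :=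
      mul_le_mul_of_nonneg_right hw (hupos j).le
    have hbr : ((N:ℝ)-j) * (b' * u j + a' * u (j-1) + a' * u (j+1))
        ≤ ((N:ℝ)-j) * (c₁ * u j) := by linarith [he, hwu]
    exact (mul_le_mul_iff_right₀ hNj).mp hbr
  -- Claim A
  have hA : ∀ j, 1 ≤ j → j ≤ K+1 → a' * η j < c₁ - b' := by
    intro j hj1 hj2
    have hc := hcan j hj1 hj2
    have hstrict : a' * u (j-1) < (c₁ - b') * u j := by
      nlinarith [mul_pos ha (hupos (j+1))]
    have : η j = u (j-1) / u j := rfl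
    rw [this, mul_div_assoc'] at *
    rw [div_lt_iff₀ (hupos j)]
    linarith
  -- Claim B
  have hB : ∀ j, 1 ≤ j → j ≤ K → η j + Δ ≤ η (j+1) := by
    intro j hj1 hj2
    have hc := hcan j hj1 (by omega)
    have hkey : a' * u (j+1) ≤ (c₁ - b') * u j - a' * u (j-1) := by nlinarith [hc]
    have hstep := step_ineq a' (c₁ - b') Δ (u (j-1)) (u j) (u (j+1)) ha hq0 hq2 hΔ
      (hupos _) (hupos _) (hupos _) hkey
    have e1 : η j = u (j-1) / u j := rfl
    have e2 : η (j+1) = u j / u (j+1) := by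
      simp only [hη, Nat.add_sub_cancel]
    rw [e1, e2]
    exact hstep
  -- Claim C
  have hC : ∀ j, 1 ≤ j → j ≤ K + 1 → ((j:ℝ) - 1) * Δ ≤ η j := by
    intro j hj1
    induction j, hj1 using Nat.le_induction with
    | base => intro _; push_cast; nlinarith [hηpos 1]
    | succ n hn ih =>
      intro hle
      have h1 := ih (by omega)
      have h2 := hB n hn (by omega)
      push_cast
      push_cast at h1
      linarith
  have hfin := hC (K+1) (by omega) le_rfl
  have hA' := hA (K+1) (by omega) le_rfl
  push_cast at hfin
  nlinarith [hηpos (K+1), hfin, hA', hKΔ]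
end
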